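/- arXiv:0707.0108 — 9 statements merged into one kernel-verified Lean document; each statement's English description precedes it below -/
import Mathlib

section
/- Let f be a nonnegative C^2 function on [-2ℓ, 2ℓ] ⊂ ℝ satisfying f'' ≥ f - a for some constant a > 0. If max of f on [-ℓ, ℓ] is at least 2a, then ∫_{-2ℓ}^{2ℓ} f ≥ 2√2 · a · sinh(ℓ/√2). -/
open Real Set intervalIntegral Filter Topology

/-- If `W'' ≥ W` on `[0,c]`, `W 0 ≥ 0`, `W' 0 = 0`, then `W c ≥ 0`. -/
lemma ode_comp_aux (c : ℝ) (W W' W'' : ℝ → ℝ) (hc : 0 ≤ c)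
    (h1 : ∀ x ∈ Icc (0:ℝ) c, HasDerivAt W (W' x) x)
    (h2 : ∀ x ∈ Icc (0:ℝ) c, HasDerivAt W' (W'' x) x)
    (h3 : ∀ x ∈ Icc (0:ℝ) c, W x ≤ W'' x)
    (h0 : 0 ≤ W 0) (h0' : W' 0 = 0) :
    0 ≤ W c := by
  have hmem0 : (0:ℝ) ∈ Icc (0:ℝ) c := ⟨le_refl _, hc⟩
  have hmemc : c ∈ Icc (0:ℝ) c := ⟨hc, le_refl _⟩
  set g : ℝ → ℝ := fun x => Real.exp (-x) * (W' x + W x) with hgdef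
  have hgd : ∀ x ∈ Icc (0:ℝ) c, HasDerivAt g (Real.exp (-x) * (W'' x - W x)) x := by
    intro x hx
    have he : HasDerivAt (fun x : ℝ => Real.exp (-x)) (-Real.exp (-x)) x := by
      simpa [Function.comp_def] using (Real.hasDerivAt_exp (-x)).comp x (hasDerivAt_neg x)
    have := he.mul ((h2 x hx).add (h1 x hx))
    exact this.congr_deriv (by simp only [Pi.add_apply]; ring)
  -- monotone of g
  have hgmono : MonotoneOn g (Icc (0:ℝ) c) := by
    apply monotoneOn_of_deriv_nonneg (convex_Icc 0 c)
    · exact fun x hx => (hgd x hx).continuousAt.continuousWithinAt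
    · intro x hx
      rw [interior_Icc] at hx
      exact ((hgd x (Ioo_subset_Icc_self hx)).differentiableAt).differentiableWithinAt
    · intro x hx
      rw [interior_Icc] at hx
      rw [(hgd x (Ioo_subset_Icc_self hx)).deriv]
      have := h3 x (Ioo_subset_Icc_self hx)
      exact mul_nonneg (Real.exp_pos _).le (by linarith)
  have hg0 : g 0 = W' 0 + W 0 := by simp [hgdef]
  have hgnonneg : ∀ x ∈ Icc (0:ℝ) c, 0 ≤ W' x + W x := by
    intro x hx
    have := hgmono hmem0 hx hx.1
    rw [hg0, h0', zero_add] at this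
    have h := le_trans h0 this
    simp only [hgdef] at h
    nlinarith [Real.exp_pos (-x)]
  set h : ℝ → ℝ := fun x => Real.exp x * W x with hhdef
  have hhd : ∀ x ∈ Icc (0:ℝ) c, HasDerivAt h (Real.exp x * (W x + W' x)) x := by
    intro x hx
    have := (Real.hasDerivAt_exp x).mul (h1 x hx)
    exact this.congr_deriv (by ring)
  have hhmono : MonotoneOn h (Icc (0:ℝ) c) := by
    apply monotoneOn_of_deriv_nonneg (convex_Icc 0 c)
    · exact fun x hx => (hhd x hx).continuousAt.continuousWithinAt
    · intro x hx
      rw [interior_Icc] at hx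
      exact ((hhd x (Ioo_subset_Icc_self hx)).differentiableAt).differentiableWithinAt
    · intro x hx
      rw [interior_Icc] at hx
      rw [(hhd x (Ioo_subset_Icc_self hx)).deriv]
      have := hgnonneg x (Ioo_subset_Icc_self hx)
      nlinarith [Real.exp_pos x]
  have := hhmono hmem0 hmemc hc
  have hh0 : h 0 = W 0 := by simp [hhdef]
  rw [hh0] at this
  have hc' := le_trans h0 this
  simp only [hhdef] at hc'
  nlinarith [Real.exp_pos c]

/-- ODE comparison lemma (Lemma `l:comp` in Colding–Minicozzi): a nonnegative `C²`
function on `[-2ℓ, 2ℓ]` with `f'' ≥ f - a` whose maximum on `[-ℓ, ℓ]` is at least `2a`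
satisfies `∫_{-2ℓ}^{2ℓ} f ≥ 2√2 · a · sinh(ℓ/√2)`. -/
theorem stmt_0 (ℓ a : ℝ) (f : ℝ → ℝ) (hℓ : 0 < ℓ) (ha : 0 < a)
    (hf : ContDiffOn ℝ 2 f (Icc (-(2*ℓ)) (2*ℓ)))
    (hpos : ∀ x ∈ Icc (-(2*ℓ)) (2*ℓ), 0 ≤ f x)
    (hineq : ∀ x ∈ Icc (-(2*ℓ)) (2*ℓ), f x - a ≤ deriv (deriv f) x)
    (hmax : ∃ x₀ ∈ Icc (-ℓ) ℓ, 2*a ≤ f x₀) :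
    2 * Real.sqrt 2 * a * Real.sinh (ℓ / Real.sqrt 2) ≤ ∫ x in (-(2*ℓ))..(2*ℓ), f x := by
  obtain ⟨x₀, hx₀, hfx₀⟩ := hmax
  obtain ⟨hx₀l, hx₀r⟩ := hx₀
  have hfc : ContinuousOn f (Icc (-(2*ℓ)) (2*ℓ)) := hf.continuousOn
  have hO : ContDiffOn ℝ 2 f (Ioo (-(2*ℓ)) (2*ℓ)) := hf.mono Ioo_subset_Icc_self
  have hd1 : ∀ y ∈ Ioo (-(2*ℓ)) (2*ℓ), HasDerivAt f (deriv f y) y := by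
    intro y hy
    exact ((hO.differentiableOn (by norm_num)).differentiableAt
      (isOpen_Ioo.mem_nhds hy)).hasDerivAt
  have hOd : ContDiffOn ℝ 1 (deriv f) (Ioo (-(2*ℓ)) (2*ℓ)) :=
    hO.deriv_of_isOpen isOpen_Ioo (by norm_num)
  have hd2 : ∀ y ∈ Ioo (-(2*ℓ)) (2*ℓ), HasDerivAt (deriv f) (deriv (deriv f) y) y := by
    intro y hy
    exact ((hOd.differentiableOn one_ne_zero).differentiableAt
      (isOpen_Ioo.mem_nhds hy)).hasDerivAt
  -- the key pointwise bound on [0, ℓ)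
  have key : ∀ x ∈ Ico (0:ℝ) ℓ, 2*a + 2*a*Real.cosh x ≤ f (x₀+x) + f (x₀-x) := by
    intro x hx
    have hmemp : ∀ t ∈ Icc (0:ℝ) x, x₀ + t ∈ Ioo (-(2*ℓ)) (2*ℓ) := fun t ht =>
      ⟨by have := ht.1; linarith, by have h1 := ht.2; have h2 := hx.2; linarith⟩
    have hmemm : ∀ t ∈ Icc (0:ℝ) x, x₀ - t ∈ Ioo (-(2*ℓ)) (2*ℓ) := fun t ht =>
      ⟨by have h1 := ht.2; have h2 := hx.2; linarith, by have := ht.1; linarith⟩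
    have hW := ode_comp_aux x
      (fun t => f (x₀+t) + f (x₀-t) - (2*a) - 2*a*Real.cosh t)
      (fun t => deriv f (x₀+t) - deriv f (x₀-t) - 2*a*Real.sinh t)
      (fun t => deriv (deriv f) (x₀+t) + deriv (deriv f) (x₀-t) - 2*a*Real.cosh t)
      hx.1
      (by
        intro t ht
        have hinp : HasDerivAt (fun t : ℝ => x₀ + t) 1 t := (hasDerivAt_id t).const_add x₀
        have hinm : HasDerivAt (fun t : ℝ => x₀ - t) (-1) t := (hasDerivAt_id t).const_sub x₀
        have c1 : HasDerivAt (fun t => f (x₀+t)) (deriv f (x₀+t) * 1) t :=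
          (hd1 _ (hmemp t ht)).comp t hinp
        have c2 : HasDerivAt (fun t => f (x₀-t)) (deriv f (x₀-t) * (-1)) t :=
          (hd1 _ (hmemm t ht)).comp t hinm
        have c3 : HasDerivAt (fun t => 2*a*Real.cosh t) (2*a*Real.sinh t) t :=
          (Real.hasDerivAt_cosh t).const_mul (2*a)
        have := (((c1.add c2).sub_const (2*a)).sub c3)
        exact this.congr_deriv (by ring))
      (by
        intro t ht
        have hinp : HasDerivAt (fun t : ℝ => x₀ + t) 1 t := (hasDerivAt_id t).const_add x₀
        have hinm : HasDerivAt (fun t : ℝ => x₀ - t) (-1) t := (hasDerivAt_id t).const_sub x₀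
        have c1 : HasDerivAt (fun t => deriv f (x₀+t)) (deriv (deriv f) (x₀+t) * 1) t :=
          (hd2 _ (hmemp t ht)).comp t hinp
        have c2 : HasDerivAt (fun t => deriv f (x₀-t)) (deriv (deriv f) (x₀-t) * (-1)) t :=
          (hd2 _ (hmemm t ht)).comp t hinm
        have c3 : HasDerivAt (fun t => 2*a*Real.sinh t) (2*a*Real.cosh t) t :=
          (Real.hasDerivAt_sinh t).const_mul (2*a)
        have := ((c1.sub c2).sub c3)
        exact this.congr_deriv (by ring))
      (by
        intro t ht
        have h1 := hineq (x₀+t) (Ioo_subset_Icc_self (hmemp t ht))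
        have h2 := hineq (x₀-t) (Ioo_subset_Icc_self (hmemm t ht))
        linarith)
      (by simp [Real.cosh_zero]; linarith)
      (by simp [Real.sinh_zero])
    have hW' := hW
    linarith [hW']
  -- extend to the closed interval, and weaken to the √2-cosh bound
  have hsq2 : (1:ℝ) ≤ Real.sqrt 2 := by
    nlinarith [Real.sq_sqrt (by norm_num : (2:ℝ) ≥ 0), Real.sqrt_nonneg 2]
  have hcoshle : ∀ x : ℝ, 0 ≤ x → Real.cosh (x / Real.sqrt 2) ≤ Real.cosh x := by
    intro x hx
    rw [Real.cosh_le_cosh]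
    rw [abs_of_nonneg (by positivity), abs_of_nonneg hx]
    exact div_le_self hx hsq2
  have hPc : ContinuousOn (fun x => f (x₀+x) + f (x₀-x)) (Icc 0 ℓ) := by
    apply ContinuousOn.add
    · apply hfc.comp ((continuous_const.add continuous_id).continuousOn)
      intro t ht
      simp only [Pi.add_apply, id_eq]
      exact ⟨by have := ht.1; linarith, by have := ht.2; linarith⟩
    · apply hfc.comp ((continuous_const.sub continuous_id).continuousOn)
      intro t ht
      simp only [Pi.sub_apply, id_eq]
      exact ⟨by have := ht.2; linarith, by have := ht.1; linarith⟩
  have key2 : ∀ x ∈ Icc (0:ℝ) ℓ, 2*a*Real.cosh (x / Real.sqrt 2) ≤ f (x₀+x) + f (x₀-x) := by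
    have hIco : ∀ x ∈ Ico (0:ℝ) ℓ, 2*a*Real.cosh (x / Real.sqrt 2) ≤ f (x₀+x) + f (x₀-x) := by
      intro x hx
      have h1 := key x hx
      have h2 := hcoshle x hx.1
      nlinarith
    intro x hx
    rcases eq_or_lt_of_le hx.2 with heq | hlt
    · subst heq
      set g : ℝ → ℝ := fun x => f (x₀+x) + f (x₀-x) - 2*a*Real.cosh (x / Real.sqrt 2) with hg
      have hgc : ContinuousOn g (Icc 0 x) := by
        apply hPc.sub
        exact (continuous_const.mul (Real.continuous_cosh.comp
          (continuous_id.div_const _))).continuousOn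
      have hne : (𝓝[Ico (0:ℝ) x] x).NeBot := by
        rw [← mem_closure_iff_nhdsWithin_neBot, closure_Ico (by linarith : (0:ℝ) ≠ x)]
        exact ⟨hx.1, le_refl x⟩
      have htend : Filter.Tendsto g (𝓝[Ico (0:ℝ) x] x) (𝓝 (g x)) :=
        (hgc x ⟨hx.1, le_refl x⟩).mono_left (nhdsWithin_mono x Ico_subset_Icc_self)
      have hev : ∀ᶠ y in 𝓝[Ico (0:ℝ) x] x, 0 ≤ g y := by
        apply eventually_nhdsWithin_of_forall
        intro y hy
        have := hIco y hy
        simp only [hg]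
        linarith
      have := ge_of_tendsto htend hev
      simp only [hg] at this
      linarith
    · exact hIco x ⟨hx.1, hlt⟩
  -- integrability facts
  have hsub : ∀ u v : ℝ, u ∈ Icc (-(2*ℓ)) (2*ℓ) → v ∈ Icc (-(2*ℓ)) (2*ℓ) →
      IntervalIntegrable f MeasureTheory.volume u v := by
    intro u v hu hv
    exact (hfc.mono (uIcc_subset_Icc hu hv)).intervalIntegrable
  have hm1 : x₀ - ℓ ∈ Icc (-(2*ℓ)) (2*ℓ) := ⟨by linarith, by linarith⟩
  have hm2 : x₀ + ℓ ∈ Icc (-(2*ℓ)) (2*ℓ) := ⟨by linarith, by linarith⟩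
  have hm3 : x₀ ∈ Icc (-(2*ℓ)) (2*ℓ) := ⟨by linarith, by linarith⟩
  have hm4 : -(2*ℓ) ∈ Icc (-(2*ℓ)) (2*ℓ) := ⟨le_refl _, by linarith⟩
  have hm5 : (2*ℓ) ∈ Icc (-(2*ℓ)) (2*ℓ) := ⟨by linarith, le_refl _⟩
  -- split the integral
  have hsplit : (∫ x in (-(2*ℓ))..(2*ℓ), f x) =
      (∫ x in (-(2*ℓ))..(x₀-ℓ), f x) + (∫ x in (x₀-ℓ)..(x₀+ℓ), f x)
        + (∫ x in (x₀+ℓ)..(2*ℓ), f x) := by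
    rw [integral_add_adjacent_intervals (hsub _ _ hm4 hm1) (hsub _ _ hm1 hm2),
      integral_add_adjacent_intervals (hsub _ _ hm4 hm2) (hsub _ _ hm2 hm5)]
  have hside1 : 0 ≤ ∫ x in (-(2*ℓ))..(x₀-ℓ), f x := by
    apply intervalIntegral.integral_nonneg (by linarith)
    intro u hu
    exact hpos u ⟨hu.1, by have := hu.2; linarith⟩
  have hside2 : 0 ≤ ∫ x in (x₀+ℓ)..(2*ℓ), f x := by
    apply intervalIntegral.integral_nonneg (by linarith)
    intro u hu
    exact hpos u ⟨by have := hu.1; linarith, hu.2⟩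
  -- middle integral rewritten by symmetrization
  have hip : IntervalIntegrable (fun x => f (x₀+x)) MeasureTheory.volume 0 ℓ := by
    apply ContinuousOn.intervalIntegrable
    apply hfc.comp ((continuous_const.add continuous_id).continuousOn)
    intro t ht
    rw [uIcc_of_le hℓ.le] at ht
    simp only [Pi.add_apply, id_eq]
    exact ⟨by have := ht.1; linarith, by have := ht.2; linarith⟩
  have him : IntervalIntegrable (fun x => f (x₀-x)) MeasureTheory.volume 0 ℓ := by
    apply ContinuousOn.intervalIntegrable
    apply hfc.comp ((continuous_const.sub continuous_id).continuousOn)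
    intro t ht
    rw [uIcc_of_le hℓ.le] at ht
    simp only [Pi.sub_apply, id_eq]
    exact ⟨by have := ht.2; linarith, by have := ht.1; linarith⟩
  have e1 : (∫ x in (0:ℝ)..ℓ, f (x₀+x)) = ∫ x in x₀..(x₀+ℓ), f x := by
    have := intervalIntegral.integral_comp_add_left (a := (0:ℝ)) (b := ℓ) f x₀
    simpa using this
  have e2 : (∫ x in (0:ℝ)..ℓ, f (x₀-x)) = ∫ x in (x₀-ℓ)..x₀, f x := by
    have h := intervalIntegral.integral_comp_neg (a := (0:ℝ)) (b := ℓ) (fun x => f (x₀ + x))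
    have h2 := intervalIntegral.integral_comp_add_left (a := -ℓ) (b := -(0:ℝ)) f x₀
    simp only [sub_eq_add_neg]
    rw [show (fun x => f (x₀ + -x)) = (fun x => (fun y => f (x₀ + y)) (-x)) from rfl] at *
    rw [h, h2]
    norm_num
  have hmid : (∫ x in (x₀-ℓ)..(x₀+ℓ), f x) = ∫ x in (0:ℝ)..ℓ, (f (x₀+x) + f (x₀-x)) := by
    rw [intervalIntegral.integral_add hip him, e1, e2,
      ← integral_add_adjacent_intervals (hsub _ _ hm1 hm3) (hsub _ _ hm3 hm2)]
    ring
  -- lower bound the middle integral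
  have hmono : (∫ x in (0:ℝ)..ℓ, 2*a*Real.cosh (x / Real.sqrt 2))
      ≤ ∫ x in (0:ℝ)..ℓ, (f (x₀+x) + f (x₀-x)) := by
    apply intervalIntegral.integral_mono_on hℓ.le _ (hip.add him) key2
    exact (continuous_const.mul (Real.continuous_cosh.comp
      (continuous_id.div_const _))).intervalIntegrable _ _
  have hval : (∫ x in (0:ℝ)..ℓ, 2*a*Real.cosh (x / Real.sqrt 2))
      = 2 * Real.sqrt 2 * a * Real.sinh (ℓ / Real.sqrt 2) := by
    rw [intervalIntegral.integral_const_mul]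
    have hs2 : Real.sqrt 2 ≠ 0 := by positivity
    rw [intervalIntegral.integral_comp_div (f := Real.cosh) hs2]
    have : (∫ x in (0/Real.sqrt 2)..(ℓ/Real.sqrt 2), Real.cosh x)
        = Real.sinh (ℓ/Real.sqrt 2) - Real.sinh (0/Real.sqrt 2) := by
      apply intervalIntegral.integral_eq_sub_of_hasDerivAt
      · exact fun x _ => Real.hasDerivAt_sinh x
      · exact Real.continuous_cosh.intervalIntegrable _ _
    rw [this]
    simp [Real.sinh_zero, smul_eq_mul]
    ring
  rw [hsplit, hmid]
  rw [← hval]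
  linarith
end

section
/- If S and T are N×2 real matrices, then |det(SᵀS) - det(TᵀT)| ≤ 2·|T - S|·max(|S|³, |T|³), where |·| denotes the Frobenius (Hilbert–Schmidt) norm. -/
open Real Finset

private lemma abs_sum_mul_le' {n : ℕ} (f g : Fin n → ℝ) :
    |∑ i, f i * g i| ≤ Real.sqrt (∑ i, f i ^ 2) * Real.sqrt (∑ i, g i ^ 2) := by
  rw [← Real.sqrt_sq_eq_abs, ← Real.sqrt_mul (by positivity)]
  exact Real.sqrt_le_sqrt (Finset.sum_mul_sq_le_sq_mul_sq _ _ _)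

private lemma le_of_sq_le' (a b : ℝ) (h : a ^ 2 ≤ b ^ 2) (hb : 0 ≤ b) : a ≤ b := by
  nlinarith [sq_nonneg (a - b), sq_nonneg (a + b)]

private lemma det_gram {N : ℕ} (M : Matrix (Fin N) (Fin 2) ℝ) :
    (M.transpose * M).det = (∑ i, M i 0 ^ 2) * (∑ i, M i 1 ^ 2) - (∑ i, M i 0 * M i 1) ^ 2 := by
  rw [Matrix.det_fin_two]
  simp only [Matrix.mul_apply, Matrix.transpose_apply]
  have e00 : ∑ j, M j 0 * M j 0 = ∑ i, M i 0 ^ 2 := by simp [pow_two]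
  have e11 : ∑ j, M j 1 * M j 1 = ∑ i, M i 1 ^ 2 := by simp [pow_two]
  have e10 : ∑ j, M j 1 * M j 0 = ∑ i, M i 0 * M i 1 := by simp [mul_comm]
  rw [e00, e11, e10]; ring

private lemma sum_two_split {N : ℕ} (f : Fin N → Fin 2 → ℝ) :
    ∑ i, ∑ j, (f i j) ^ 2 = (∑ i, f i 0 ^ 2) + (∑ i, f i 1 ^ 2) := by
  rw [← Finset.sum_add_distrib]
  exact Finset.sum_congr rfl fun i _ => Fin.sum_univ_two _

/-- Weighted Cauchy–Schwarz in ℝ³ (Lagrange-identity form). -/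
private lemma cs3_lemma (a c b p r q : ℝ) :
    (2*((a*c - b^2) - (p*r - q^2)))^2 ≤
      ((a-p)^2+(c-r)^2+2*(b-q)^2) * ((c+r)^2+(a+p)^2+2*(b+q)^2) := by
  nlinarith [sq_nonneg ((a-p)*(a+p)-(c-r)*(c+r)), sq_nonneg ((a-p)*(b+q)+(b-q)*(c+r)),
    sq_nonneg ((c-r)*(b+q)+(b-q)*(a+p))]

private lemma stepP_lemma (a c b p r q s t u w : ℝ)
    (h1 : |p - a| ≤ s * u) (h2 : |r - c| ≤ t * w) (h3 : |q - b| ≤ (s*w + t*u)/2) :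
    (a-p)^2+(c-r)^2+2*(b-q)^2 ≤ (s^2+t^2)*(u^2+w^2) := by
  have e1 : (p-a)^2 ≤ (s*u)^2 := by
    have := pow_le_pow_left₀ (abs_nonneg _) h1 2; rw [sq_abs] at this; nlinarith [this]
  have e2 : (r-c)^2 ≤ (t*w)^2 := by
    have := pow_le_pow_left₀ (abs_nonneg _) h2 2; rw [sq_abs] at this; nlinarith [this]
  have e3 : (q-b)^2 ≤ ((s*w + t*u)/2)^2 := by
    have := pow_le_pow_left₀ (abs_nonneg _) h3 2; rw [sq_abs] at this; exact this
  nlinarith [sq_nonneg (s*w - t*u)]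

private lemma stepQ_lemma (b q aa gg pp rr : ℝ) (haa : 0 ≤ aa) (hgg : 0 ≤ gg) (hpp : 0 ≤ pp) (hrr : 0 ≤ rr)
    (hb : |b| ≤ aa*gg) (hq : |q| ≤ pp*rr) :
    (gg^2+rr^2)^2+(aa^2+pp^2)^2+2*(b+q)^2 ≤ (aa^2+gg^2+pp^2+rr^2)^2 := by
  obtain ⟨hb1, hb2⟩ := abs_le.1 hb
  obtain ⟨hq1, hq2⟩ := abs_le.1 hq
  nlinarith [sq_nonneg (aa*rr - gg*pp), mul_nonneg (mul_nonneg haa hgg) (mul_nonneg hpp hrr)]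

private lemma cube_lemma (x y m : ℝ) (hx : 0 ≤ x) (hy : 0 ≤ y) (hxm : x ≤ m) (hym : y ≤ m) :
    (x+y)*(x^2+y^2) ≤ 4*m^3 := by
  have hm : 0 ≤ m := le_trans hx hxm
  nlinarith [mul_nonneg hx hy, mul_le_mul hxm hxm hx hm, mul_le_mul hym hym hy hm,
    sq_nonneg (x-y), sq_nonneg (x+y), mul_nonneg (mul_nonneg hx hx) hy,
    mul_nonneg hx (mul_nonneg hy hy)]

private lemma sq_sum_lemma (p a cs sp sa : ℝ) (hsp2 : sp^2 = p) (hsa2 : sa^2 = a)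
    (hcs : cs ≤ sp * sa) : p + a + 2*cs ≤ (sp+sa)^2 := by nlinarith

private lemma cross_lemma (sa sc sp sr x y : ℝ) (hsa : 0 ≤ sa) (hsc : 0 ≤ sc) (hsp : 0 ≤ sp)
    (hsr : 0 ≤ sr) (hx : 0 ≤ x) (hy : 0 ≤ y)
    (hx2 : x^2 = sa^2 + sc^2) (hy2 : y^2 = sp^2 + sr^2) :
    (sp+sa)^2+(sr+sc)^2 ≤ (x+y)^2 := by
  have hcross : sa*sp + sc*sr ≤ x*y := by
    refine le_of_sq_le' _ _ ?_ (mul_nonneg hx hy)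
    have : (x*y)^2 = (sa^2+sc^2)*(sp^2+sr^2) := by rw [mul_pow, hx2, hy2]
    rw [this]; nlinarith [sq_nonneg (sa*sr - sc*sp)]
  nlinarith [hcross]

set_option maxHeartbeats 1000000 in
/-- If `S` and `T` are `N × 2` real matrices, then
`|det(SᵀS) - det(TᵀT)| ≤ 2 · |T - S| · max(|S|³, |T|³)`,
where `|·|` is the Frobenius (Hilbert–Schmidt) norm, given by the square root
of the sum of the squares of the entries. -/
theorem stmt_1 (N : ℕ) (S T : Matrix (Fin N) (Fin 2) ℝ) :
    |(S.transpose * S).det - (T.transpose * T).det| ≤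
      2 * Real.sqrt (∑ i, ∑ j, (T i j - S i j)^2) *
        max ((Real.sqrt (∑ i, ∑ j, (S i j)^2))^3) ((Real.sqrt (∑ i, ∑ j, (T i j)^2))^3) := by
  rw [det_gram S, det_gram T, sum_two_split (fun i j => T i j - S i j),
    sum_two_split (fun i j => S i j), sum_two_split (fun i j => T i j)]
  set a := ∑ i, S i 0 ^ 2 with ha_def
  set c := ∑ i, S i 1 ^ 2 with hc_def
  set b := ∑ i, S i 0 * S i 1 with hb_def
  set p := ∑ i, T i 0 ^ 2 with hp_def
  set r := ∑ i, T i 1 ^ 2 with hr_def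
  set q := ∑ i, T i 0 * T i 1 with hq_def
  set A := ∑ i, (T i 0 - S i 0) ^ 2 with hA_def
  set C := ∑ i, (T i 1 - S i 1) ^ 2 with hC_def
  have ha : (0:ℝ) ≤ a := Finset.sum_nonneg fun i _ => sq_nonneg _
  have hc : (0:ℝ) ≤ c := Finset.sum_nonneg fun i _ => sq_nonneg _
  have hp : (0:ℝ) ≤ p := Finset.sum_nonneg fun i _ => sq_nonneg _
  have hr : (0:ℝ) ≤ r := Finset.sum_nonneg fun i _ => sq_nonneg _
  have hA : (0:ℝ) ≤ A := Finset.sum_nonneg fun i _ => sq_nonneg _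
  have hC : (0:ℝ) ≤ C := Finset.sum_nonneg fun i _ => sq_nonneg _
  set sa := Real.sqrt a with hsa_def
  set sc := Real.sqrt c with hsc_def
  set sp := Real.sqrt p with hsp_def
  set sr := Real.sqrt r with hsr_def
  set s := Real.sqrt A with hs_def
  set t := Real.sqrt C with ht_def
  set x := Real.sqrt (a + c) with hx_def
  set y := Real.sqrt (p + r) with hy_def
  set d := Real.sqrt (A + C) with hd_def
  have hsa : 0 ≤ sa := Real.sqrt_nonneg _
  have hsc : 0 ≤ sc := Real.sqrt_nonneg _
  have hsp : 0 ≤ sp := Real.sqrt_nonneg _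
  have hsr : 0 ≤ sr := Real.sqrt_nonneg _
  have hs : 0 ≤ s := Real.sqrt_nonneg _
  have ht : 0 ≤ t := Real.sqrt_nonneg _
  have hx : 0 ≤ x := Real.sqrt_nonneg _
  have hy : 0 ≤ y := Real.sqrt_nonneg _
  have hd : 0 ≤ d := Real.sqrt_nonneg _
  have hsa2 : sa ^ 2 = a := Real.sq_sqrt ha
  have hsc2 : sc ^ 2 = c := Real.sq_sqrt hc
  have hsp2 : sp ^ 2 = p := Real.sq_sqrt hp
  have hsr2 : sr ^ 2 = r := Real.sq_sqrt hr
  have hs2 : s ^ 2 = A := Real.sq_sqrt hA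
  have ht2 : t ^ 2 = C := Real.sq_sqrt hC
  have hx2 : x ^ 2 = a + c := Real.sq_sqrt (by linarith)
  have hy2 : y ^ 2 = p + r := Real.sq_sqrt (by linarith)
  have hd2 : d ^ 2 = A + C := Real.sq_sqrt (by linarith)
  -- Cauchy-Schwarz: |b| ≤ sa·sc, |q| ≤ sp·sr
  have hb' : |b| ≤ sa * sc := by
    rw [hb_def, hsa_def, hsc_def, ha_def, hc_def]
    exact abs_sum_mul_le' (fun i => S i 0) (fun i => S i 1)
  have hq' : |q| ≤ sp * sr := by
    rw [hq_def, hsp_def, hsr_def, hp_def, hr_def]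
    exact abs_sum_mul_le' (fun i => T i 0) (fun i => T i 1)
  -- bounds on sqrt of sums of (T+S)^2
  have sumTS0 : ∑ i, (T i 0 + S i 0) ^ 2 = p + a + 2 * ∑ i, T i 0 * S i 0 := by
    rw [hp_def, ha_def, Finset.mul_sum, ← Finset.sum_add_distrib, ← Finset.sum_add_distrib]
    exact Finset.sum_congr rfl fun i _ => by ring
  have sumTS1 : ∑ i, (T i 1 + S i 1) ^ 2 = r + c + 2 * ∑ i, T i 1 * S i 1 := by
    rw [hr_def, hc_def, Finset.mul_sum, ← Finset.sum_add_distrib, ← Finset.sum_add_distrib]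
    exact Finset.sum_congr rfl fun i _ => by ring
  have cs0 : ∑ i, T i 0 * S i 0 ≤ sp * sa := by
    rw [hsp_def, hsa_def, hp_def, ha_def]
    exact Real.sum_mul_le_sqrt_mul_sqrt _ (fun i => T i 0) (fun i => S i 0)
  have cs1 : ∑ i, T i 1 * S i 1 ≤ sr * sc := by
    rw [hsr_def, hsc_def, hr_def, hc_def]
    exact Real.sum_mul_le_sqrt_mul_sqrt _ (fun i => T i 1) (fun i => S i 1)
  have sq0 : Real.sqrt (∑ i, (T i 0 + S i 0) ^ 2) ≤ sp + sa := by
    refine le_of_sq_le' _ _ ?_ (by linarith)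
    rw [Real.sq_sqrt (Finset.sum_nonneg fun i _ => sq_nonneg _), sumTS0]
    exact sq_sum_lemma p a _ sp sa hsp2 hsa2 cs0
  have sq1 : Real.sqrt (∑ i, (T i 1 + S i 1) ^ 2) ≤ sr + sc := by
    refine le_of_sq_le' _ _ ?_ (by linarith)
    rw [Real.sq_sqrt (Finset.sum_nonneg fun i _ => sq_nonneg _), sumTS1]
    exact sq_sum_lemma r c _ sr sc hsr2 hsc2 cs1
  -- difference bounds
  have h1 : |p - a| ≤ s * (sp + sa) := by
    have e : p - a = ∑ i, (T i 0 - S i 0) * (T i 0 + S i 0) := by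
      rw [hp_def, ha_def, ← Finset.sum_sub_distrib]
      exact Finset.sum_congr rfl fun i _ => by ring
    rw [e]
    calc |∑ i, (T i 0 - S i 0) * (T i 0 + S i 0)|
        ≤ s * Real.sqrt (∑ i, (T i 0 + S i 0) ^ 2) := abs_sum_mul_le' _ _
      _ ≤ s * (sp + sa) := mul_le_mul_of_nonneg_left sq0 hs
  have h2 : |r - c| ≤ t * (sr + sc) := by
    have e : r - c = ∑ i, (T i 1 - S i 1) * (T i 1 + S i 1) := by
      rw [hr_def, hc_def, ← Finset.sum_sub_distrib]
      exact Finset.sum_congr rfl fun i _ => by ring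
    rw [e]
    calc |∑ i, (T i 1 - S i 1) * (T i 1 + S i 1)|
        ≤ t * Real.sqrt (∑ i, (T i 1 + S i 1) ^ 2) := abs_sum_mul_le' _ _
      _ ≤ t * (sr + sc) := mul_le_mul_of_nonneg_left sq1 ht
  have h3 : |q - b| ≤ (s * (sr + sc) + t * (sp + sa)) / 2 := by
    have e : q - b = (∑ i, (T i 0 - S i 0) * (T i 1 + S i 1)
        + ∑ i, (T i 0 + S i 0) * (T i 1 - S i 1)) / 2 := by
      rw [hq_def, hb_def, ← Finset.sum_sub_distrib, ← Finset.sum_add_distrib, Finset.sum_div]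
      exact Finset.sum_congr rfl fun i _ => by ring
    rw [e, abs_div, abs_of_nonneg (by norm_num : (0:ℝ) ≤ 2)]
    have b1 : |∑ i, (T i 0 - S i 0) * (T i 1 + S i 1)| ≤ s * (sr + sc) :=
      (abs_sum_mul_le' _ _).trans (mul_le_mul_of_nonneg_left sq1 hs)
    have b2 : |∑ i, (T i 0 + S i 0) * (T i 1 - S i 1)| ≤ (sp + sa) * t := by
      refine (abs_sum_mul_le' _ _).trans ?_
      exact mul_le_mul sq0 le_rfl ht (by linarith)
    calc |∑ i, (T i 0 - S i 0) * (T i 1 + S i 1) + ∑ i, (T i 0 + S i 0) * (T i 1 - S i 1)| / 2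
        ≤ (|∑ i, (T i 0 - S i 0) * (T i 1 + S i 1)| + |∑ i, (T i 0 + S i 0) * (T i 1 - S i 1)|) / 2 := by
          gcongr; exact abs_add_le _ _
      _ ≤ (s * (sr + sc) + t * (sp + sa)) / 2 := by rw [mul_comm t (sp+sa)] at *; linarith
  -- the three scalar steps
  have hDsq := cs3_lemma a c b p r q
  have hP : (a-p)^2+(c-r)^2+2*(b-q)^2 ≤ (s^2+t^2)*((sp+sa)^2+(sr+sc)^2) :=
    stepP_lemma a c b p r q s t (sp+sa) (sr+sc) h1 h2 h3
  have hQ : (c+r)^2+(a+p)^2+2*(b+q)^2 ≤ (a+c+p+r)^2 := by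
    rw [← hsa2, ← hsc2, ← hsp2, ← hsr2]
    exact stepQ_lemma b q sa sc sp sr hsa hsc hsp hsr hb' hq'
  have hUW : (sp+sa)^2+(sr+sc)^2 ≤ (x+y)^2 := by
    refine cross_lemma sa sc sp sr x y hsa hsc hsp hsr hx hy ?_ ?_
    · rw [hx2, hsa2, hsc2]
    · rw [hy2, hsp2, hsr2]
  -- assemble
  set m := max x y with hm_def
  have hxm : x ≤ m := le_max_left _ _
  have hym : y ≤ m := le_max_right _ _
  have hm : 0 ≤ m := le_trans hx hxm
  have hmax3 : max (x^3) (y^3) = m^3 := by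
    rcases le_total x y with h | h
    · rw [hm_def, max_eq_right h, max_eq_right (pow_le_pow_left₀ hx h 3)]
    · rw [hm_def, max_eq_left h, max_eq_left (pow_le_pow_left₀ hy h 3)]
  rw [hmax3]
  have h4m : (x+y)*(x^2+y^2) ≤ 4*m^3 := cube_lemma x y m hx hy hxm hym
  have hPd : (a-p)^2+(c-r)^2+2*(b-q)^2 ≤ d^2*(x+y)^2 := by
    refine hP.trans ?_
    have hst : s^2 + t^2 = d^2 := by rw [hs2, ht2, hd2]
    rw [hst]
    exact mul_le_mul_of_nonneg_left hUW (by positivity)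
  have hQx : (c+r)^2+(a+p)^2+2*(b+q)^2 ≤ (x^2+y^2)^2 := by
    refine hQ.trans ?_
    rw [hx2, hy2]
    apply le_of_eq; ring
  have h6 : ((a-p)^2+(c-r)^2+2*(b-q)^2) * ((c+r)^2+(a+p)^2+2*(b+q)^2)
      ≤ d^2*((x+y)*(x^2+y^2))^2 := by
    calc ((a-p)^2+(c-r)^2+2*(b-q)^2) * ((c+r)^2+(a+p)^2+2*(b+q)^2)
        ≤ (d^2*(x+y)^2) * ((x^2+y^2)^2) :=
          mul_le_mul hPd hQx (by positivity) (by positivity)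
      _ = d^2*((x+y)*(x^2+y^2))^2 := by ring
  have h5 : ((x+y)*(x^2+y^2))^2 ≤ (4*m^3)^2 :=
    pow_le_pow_left₀ (by positivity) h4m 2
  have h7 : d^2*((x+y)*(x^2+y^2))^2 ≤ d^2*(4*m^3)^2 :=
    mul_le_mul_of_nonneg_left h5 (by positivity)
  refine le_of_sq_le' _ _ ?_
    (mul_nonneg (mul_nonneg (by norm_num) hd) (pow_nonneg hm 3))
  rw [sq_abs]
  linarith [hDsq, h6, h7]
end

section
/- Let W : [0, ∞) → ℝ be a nonnegative function differentiable (in the sense that the forward difference quotients satisfy the inequality) with W'(t) ≤ -4π + (3/(4(t + C)))·W(t) for some constant C > 0. Then there exists a finite time T > 0 such that it is impossible for W to remain nonnegative on [0, T]; i.e., W must vanish before some explicit finite time. More precisely, for any T with C^{-3/4}·W(0) < 16π·((T+C)^{1/4} - C^{1/4}), we get a contradiction with W(T) ≥ 0, so W hits zero before such a T. -/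
open Real Set

/-- Finite extinction: a nonnegative width function `W` satisfying
`W'(t) ≤ -4π + (3/(4(t+C)))·W(t)` cannot remain nonnegative past the explicit time `T`
determined by `C^{-3/4}·W(0) < 16π·((T+C)^{1/4} - C^{1/4})`. -/
theorem stmt_3 (C T : ℝ) (W : ℝ → ℝ) (hC : 0 < C) (hT : 0 < T)
    (hdiff : ∀ t ∈ Icc (0:ℝ) T, HasDerivAt W (deriv W t) t)
    (hineq : ∀ t ∈ Icc (0:ℝ) T, deriv W t ≤ -(4*π) + 3/(4*(t+C)) * W t)
    (hbig : C ^ (-(3:ℝ)/4) * W 0 < 16*π*((T+C) ^ ((1:ℝ)/4) - C ^ ((1:ℝ)/4))) :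
    ¬ (∀ t ∈ Icc (0:ℝ) T, 0 ≤ W t) := by
  intro hpos
  set f : ℝ → ℝ := fun t => (t + C) ^ (-(3:ℝ)/4) * W t + 16 * π * (t + C) ^ ((1:ℝ)/4)
    with hf_def
  set φ : ℝ → ℝ := fun t =>
    (1 * (-(3:ℝ)/4) * (t + C) ^ (-(3:ℝ)/4 - 1)) * W t + (t + C) ^ (-(3:ℝ)/4) * deriv W t
      + 16 * π * (1 * ((1:ℝ)/4) * (t + C) ^ ((1:ℝ)/4 - 1)) with hφ_def
  have hposC : ∀ t ∈ Icc (0:ℝ) T, 0 < t + C := fun t ht => by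
    have := ht.1; linarith
  have hder : ∀ t ∈ Icc (0:ℝ) T, HasDerivAt f (φ t) t := by
    intro t ht
    have htC := hposC t ht
    have h1 : HasDerivAt (fun s : ℝ => s + C) 1 t := (hasDerivAt_id t).add_const C
    have h2 : HasDerivAt (fun s : ℝ => (s + C) ^ (-(3:ℝ)/4))
        (1 * (-(3:ℝ)/4) * (t + C) ^ (-(3:ℝ)/4 - 1)) t :=
      h1.rpow_const (Or.inl htC.ne')
    have h3 : HasDerivAt (fun s : ℝ => (s + C) ^ ((1:ℝ)/4))
        (1 * ((1:ℝ)/4) * (t + C) ^ ((1:ℝ)/4 - 1)) t :=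
      h1.rpow_const (Or.inl htC.ne')
    exact (h2.mul (hdiff t ht)).add ((h3.const_mul (16 * π)))
  have hφ_nonpos : ∀ t ∈ Icc (0:ℝ) T, φ t ≤ 0 := by
    intro t ht
    have htC := hposC t ht
    set A : ℝ := (t + C) ^ (-(3:ℝ)/4) with hA
    have hA_pos : 0 < A := rpow_pos_of_pos htC _
    have e1 : (t + C) ^ (-(3:ℝ)/4 - 1) = A / (t + C) := by
      rw [rpow_sub htC, rpow_one, hA]
    have e2 : (t + C) ^ ((1:ℝ)/4 - 1) = A := by
      rw [hA]; norm_num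
    have hW := hineq t ht
    have : A * deriv W t ≤ A * (-(4*π) + 3/(4*(t+C)) * W t) := by
      exact mul_le_mul_of_nonneg_left hW hA_pos.le
    simp only [hφ_def, e1, e2]
    have hfield : (1 * (-(3:ℝ)/4) * (A / (t + C))) * W t
        + A * (-(4*π) + 3/(4*(t+C)) * W t) + 16 * π * (1 * ((1:ℝ)/4) * A) = 0 := by
      field_simp
      ring
    rw [← hA]
    linarith [this, hfield]
  -- f is antitone on Icc 0 T
  have hcont : ContinuousOn f (Icc (0:ℝ) T) := fun t ht =>
    (hder t ht).continuousAt.continuousWithinAt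
  have hint : interior (Icc (0:ℝ) T) = Ioo (0:ℝ) T := interior_Icc
  have hanti : AntitoneOn f (Icc (0:ℝ) T) := by
    apply antitoneOn_of_deriv_nonpos (convex_Icc 0 T) hcont
    · intro x hx
      rw [hint] at hx
      exact ((hder x (Ioo_subset_Icc_self hx)).differentiableAt).differentiableWithinAt
    · intro x hx
      rw [hint] at hx
      rw [(hder x (Ioo_subset_Icc_self hx)).deriv]
      exact hφ_nonpos x (Ioo_subset_Icc_self hx)
  have h0 : (0:ℝ) ∈ Icc (0:ℝ) T := ⟨le_refl 0, hT.le⟩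
  have hTm : T ∈ Icc (0:ℝ) T := ⟨hT.le, le_refl T⟩
  have hfT : f T ≤ f 0 := hanti h0 hTm hT.le
  have hWT : 0 ≤ W T := hpos T hTm
  have hAT : 0 ≤ (T + C) ^ (-(3:ℝ)/4) := (rpow_pos_of_pos (by linarith) _).le
  have hf0 : f 0 = C ^ (-(3:ℝ)/4) * W 0 + 16 * π * C ^ ((1:ℝ)/4) := by
    simp [hf_def]
  have hfT' : 16 * π * (T + C) ^ ((1:ℝ)/4) ≤ f T := by
    have := mul_nonneg hAT hWT
    simp only [hf_def]; linarith
  rw [hf0] at hfT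
  nlinarith [hfT', hfT]
end

section
/- Let f be a C^2 function on [x₀, b] ⊂ ℝ with f ≥ 0, f(x₀) > 0, f'(x₀) ≥ 0, and f'' ≥ (1/2)·f on [x₀, b]. Then for all t ∈ [0, b - x₀], f(x₀ + t) ≥ f(x₀)·cosh(t/√2). -/
open Real Set

/-- Riccati/cosh comparison: a nonnegative `C²` function with `f(x₀) > 0`, `f'(x₀) ≥ 0`
and `f'' ≥ f/2` on `[x₀, b]` satisfies `f(x₀+t) ≥ f(x₀)·cosh(t/√2)` for `t ∈ [0, b-x₀]`. -/
theorem stmt_6 (x₀ b : ℝ) (f : ℝ → ℝ) (hx : x₀ < b)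
    (hf : ContDiffOn ℝ 2 f (Icc x₀ b))
    (hpos : ∀ x ∈ Icc x₀ b, 0 ≤ f x) (h0 : 0 < f x₀)
    (h0' : 0 ≤ deriv f x₀)
    (hineq : ∀ x ∈ Icc x₀ b, f x / 2 ≤ deriv (deriv f) x) :
    ∀ t ∈ Icc (0:ℝ) (b - x₀), f x₀ * Real.cosh (t / Real.sqrt 2) ≤ f (x₀ + t) := by
  have s2pos : (0:ℝ) < Real.sqrt 2 := Real.sqrt_pos.2 (by norm_num)
  have s2sq : Real.sqrt 2 * Real.sqrt 2 = 2 := Real.mul_self_sqrt (by norm_num)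
  set T := b - x₀ with hT
  have hTpos : 0 < T := by simp only [hT]; linarith
  set c : ℝ → ℝ := fun t => Real.cosh (t / Real.sqrt 2) with hc
  set s : ℝ → ℝ := fun t => Real.sinh (t / Real.sqrt 2) / Real.sqrt 2 with hs
  have hcd : ∀ t : ℝ, HasDerivAt c (s t) t := by
    intro t
    have h1 : HasDerivAt (fun t : ℝ => t / Real.sqrt 2) (1 / Real.sqrt 2) t := by
      simpa using (hasDerivAt_id t).div_const (Real.sqrt 2)
    have := (Real.hasDerivAt_cosh (t / Real.sqrt 2)).comp t h1
    simpa [hc, hs, div_eq_mul_inv, mul_comm, Function.comp_def] using this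
  have hsd : ∀ t : ℝ, HasDerivAt s (c t / 2) t := by
    intro t
    have h1 : HasDerivAt (fun t : ℝ => t / Real.sqrt 2) (1 / Real.sqrt 2) t := by
      simpa using (hasDerivAt_id t).div_const (Real.sqrt 2)
    have := ((Real.hasDerivAt_sinh (t / Real.sqrt 2)).comp t h1).div_const (Real.sqrt 2)
    rw [hs]
    refine this.congr_deriv ?_
    rw [hc, mul_one_div, div_div, s2sq]
  have hcpos : ∀ t : ℝ, 0 < c t := fun t => Real.cosh_pos _
  have hccont : Continuous c := Real.continuous_cosh.comp (continuous_id.div_const _)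
  have hscont : Continuous s := (Real.continuous_sinh.comp (continuous_id.div_const _)).div_const _
  -- interior regularity
  have hf2 : ContDiffOn ℝ 2 f (Ioo x₀ b) := hf.mono Ioo_subset_Icc_self
  have hdf1 : ContDiffOn ℝ 1 (deriv f) (Ioo x₀ b) :=
    hf2.deriv_of_isOpen isOpen_Ioo (by norm_num)
  have hfd : ∀ x ∈ Ioo x₀ b, HasDerivAt f (deriv f x) x := by
    intro x hx'
    exact ((hf2.contDiffAt (isOpen_Ioo.mem_nhds hx')).differentiableAt
      (by norm_num)).hasDerivAt
  have hdfd : ∀ x ∈ Ioo x₀ b, HasDerivAt (deriv f) (deriv (deriv f) x) x := by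
    intro x hx'
    exact (((hdf1.differentiableOn one_ne_zero) x hx').differentiableAt
      (isOpen_Ioo.mem_nhds hx')).hasDerivAt
  -- continuity of deriv f at x₀
  have hcont0 : ContinuousAt (deriv f) x₀ := by
    have h2 := hineq x₀ ⟨le_refl _, hx.le⟩
    have hne : deriv (deriv f) x₀ ≠ 0 := ne_of_gt (lt_of_lt_of_le (by linarith) h2)
    have hdiff : DifferentiableAt ℝ (deriv f) x₀ := by
      by_contra h
      exact hne (deriv_zero_of_not_differentiableAt h)
    exact hdiff.continuousAt
  -- maps-to facts
  have hmaps : ∀ t ∈ Icc (0:ℝ) T, x₀ + t ∈ Icc x₀ b := by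
    intro t ht; constructor <;> [linarith [ht.1]; linarith [ht.2]]
  have hmapso : ∀ t ∈ Ioo (0:ℝ) T, x₀ + t ∈ Ioo x₀ b := by
    intro t ht; constructor <;> [linarith [ht.1]; linarith [ht.2]]
  have hshift : Continuous (fun t : ℝ => x₀ + t) := continuous_const.add continuous_id
  have hfcomp : ContinuousOn (fun t => f (x₀ + t)) (Icc 0 T) :=
    hf.continuousOn.comp hshift.continuousOn hmaps
  -- the Wronskian-like function φ
  set φ : ℝ → ℝ := fun t => deriv f (x₀ + t) * c t - f (x₀ + t) * s t with hφ
  have hφcont : ContinuousOn φ (Ico 0 T) := by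
    have hdc : ContinuousOn (fun t => deriv f (x₀ + t)) (Ico 0 T) := by
      intro t ht
      rcases eq_or_lt_of_le ht.1 with h | h
      · subst h
        have h0c : ContinuousAt (deriv f) (x₀ + 0) := by simpa using hcont0
        exact (h0c.comp (by simpa using hshift.continuousAt)).continuousWithinAt
      · have hmem : x₀ + t ∈ Ioo x₀ b := hmapso t ⟨h, ht.2⟩
        have : ContinuousAt (deriv f) (x₀ + t) :=
          (hdf1.contDiffAt (isOpen_Ioo.mem_nhds hmem)).continuousAt
        exact (this.comp (by simpa using hshift.continuousAt)).continuousWithinAt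
    exact ((hdc.mul hccont.continuousOn).sub
      ((hfcomp.mono Ico_subset_Icc_self).mul hscont.continuousOn))
  have hφderiv : ∀ t ∈ Ioo (0:ℝ) T, HasDerivAt φ
      (deriv (deriv f) (x₀ + t) * c t - f (x₀ + t) * (c t / 2)) t := by
    intro t ht
    have hmem : x₀ + t ∈ Ioo x₀ b := hmapso t ht
    have hsh : HasDerivAt (fun u : ℝ => x₀ + u) 1 t := by
      simpa using (hasDerivAt_id t).const_add x₀
    have hA : HasDerivAt (fun u => deriv f (x₀ + u)) (deriv (deriv f) (x₀ + t)) t := by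
      simpa [Function.comp_def] using (hdfd _ hmem).comp t hsh
    have hB : HasDerivAt (fun u => f (x₀ + u)) (deriv f (x₀ + t)) t := by
      simpa [Function.comp_def] using (hfd _ hmem).comp t hsh
    have := (hA.mul (hcd t)).sub (hB.mul (hsd t))
    refine this.congr_deriv ?_
    ring
  have hφmono : MonotoneOn φ (Ico 0 T) := by
    apply monotoneOn_of_deriv_nonneg (convex_Ico 0 T) hφcont
    · rw [interior_Ico]
      intro t ht
      exact (hφderiv t ht).differentiableAt.differentiableWithinAt
    · rw [interior_Ico]
      intro t ht
      rw [(hφderiv t ht).deriv]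
      have hmem : x₀ + t ∈ Icc x₀ b := hmaps t ⟨ht.1.le, ht.2.le⟩
      have h1 := hineq _ hmem
      have h2 := hpos _ hmem
      have h3 := hcpos t
      nlinarith
  have hφ0 : φ 0 = deriv f x₀ := by
    simp [hφ, hc, hs, Real.cosh_zero, Real.sinh_zero]
  have hφnonneg : ∀ t ∈ Ico (0:ℝ) T, 0 ≤ φ t := by
    intro t ht
    have := hφmono ⟨le_refl 0, hTpos⟩ ht ht.1
    rw [hφ0] at this
    linarith
  -- the ratio ψ
  set ψ : ℝ → ℝ := fun t => f (x₀ + t) / c t with hψ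
  have hψcont : ContinuousOn ψ (Icc 0 T) :=
    hfcomp.div hccont.continuousOn (fun t _ => (hcpos t).ne')
  have hψderiv : ∀ t ∈ Ioo (0:ℝ) T, HasDerivAt ψ (φ t / (c t) ^ 2) t := by
    intro t ht
    have hmem : x₀ + t ∈ Ioo x₀ b := hmapso t ht
    have hsh : HasDerivAt (fun u : ℝ => x₀ + u) 1 t := by
      simpa using (hasDerivAt_id t).const_add x₀
    have hB : HasDerivAt (fun u => f (x₀ + u)) (deriv f (x₀ + t)) t := by
      simpa [Function.comp_def] using (hfd _ hmem).comp t hsh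
    have := hB.div (hcd t) (hcpos t).ne'
    exact this
  have hψmono : MonotoneOn ψ (Icc 0 T) := by
    apply monotoneOn_of_deriv_nonneg (convex_Icc 0 T) hψcont
    · rw [interior_Icc]
      intro t ht
      exact (hψderiv t ht).differentiableAt.differentiableWithinAt
    · rw [interior_Icc]
      intro t ht
      rw [(hψderiv t ht).deriv]
      apply div_nonneg (hφnonneg t ⟨ht.1.le, ht.2⟩) (by positivity)
  have hψ0 : ψ 0 = f x₀ := by
    simp [hψ, hc, Real.cosh_zero]
  intro t ht
  have := hψmono ⟨le_refl 0, hTpos.le⟩ ht ht.1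
  rw [hψ0, hψ] at this
  have := (le_div_iff₀ (hcpos t)).mp this
  simpa [hc] using this
end

section
/- Let f, g : S¹ → ℝ^N be C^1 maps agreeing at a point, and let ρ > 0 satisfy ρ² = ∫|f'-g'|² / (8·∫(|f'|² + |g'|²)) (assume the denominator is positive). Define ŵ on the annulus B₁ \ B_{1-ρ} ⊂ ℝ² in polar coordinates by ŵ(r,θ) = f(θ) + ((r + ρ - 1)/ρ)·(g(θ) - f(θ)). Then the Dirichlet energy ∫_{B₁ \ B_{1-ρ}} |∇ŵ|² ≤ (17/√2)·(∫_{S¹}|f'-g'|² · ∫_{S¹}(|f'|²+|g'|²))^{1/2}. -/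
open Real Set intervalIntegral
set_option maxHeartbeats 2000000
open MeasureTheory in
set_option maxHeartbeats 1000000 in
/-- Poincaré inequality with constant `33/8` for a `C¹` function vanishing at both
endpoints of an interval of length `2π`, proved with the Riccati test function
`φ(θ) = -k·tan(k(θ-a-π))`, `k = √(8/33)`. -/
lemma poincare833 {E : Type*} [NormedAddCommGroup E] [InnerProductSpace ℝ E]
    (h : ℝ → E) (hh : ContDiff ℝ 1 h) (a : ℝ) (h0 : h a = 0) (h1 : h (a + 2*π) = 0) :
    (8/33) * ∫ θ in a..(a+2*π), ‖h θ‖^2 ≤ ∫ θ in a..(a+2*π), ‖deriv h θ‖^2 := by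
  have hπ := Real.pi_pos
  have hab : a ≤ a + 2*π := by linarith
  set k : ℝ := Real.sqrt (8/33) with hk
  have hk2 : k^2 = 8/33 := Real.sq_sqrt (by norm_num)
  have hkpos : 0 < k := Real.sqrt_pos.mpr (by norm_num)
  have hkhalf : k < 1/2 := by nlinarith [hk2, hkpos]
  -- the test function
  set φ : ℝ → ℝ := fun θ => -(k * Real.tan (k*(θ - a - π))) with hφ
  have hcos : ∀ θ ∈ Icc a (a+2*π), Real.cos (k*(θ - a - π)) ≠ 0 := by
    intro θ hθ
    have h1' : -(π/2) < k*(θ - a - π) := by nlinarith [hθ.1, hθ.2]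
    have h2' : k*(θ - a - π) < π/2 := by nlinarith [hθ.1, hθ.2]
    exact (Real.cos_pos_of_mem_Ioo ⟨h1', h2'⟩).ne'
  have huIcc : uIcc a (a+2*π) = Icc a (a+2*π) := uIcc_of_le hab
  -- derivative of φ
  have hφd : ∀ θ ∈ Icc a (a+2*π), HasDerivAt φ (-(k^2 + (φ θ)^2)) θ := by
    intro θ hθ
    have harg : HasDerivAt (fun θ : ℝ => k*(θ - a - π)) k θ := by
      simpa using (((hasDerivAt_id θ).sub_const a).sub_const π).const_mul k
    have htan := (Real.hasDerivAt_tan (hcos θ hθ)).comp θ harg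
    have := htan.const_mul (-k)
    have hid : -k * (1 / Real.cos (k*(θ - a - π)) ^ 2 * k) = -(k^2 + (φ θ)^2) := by
      have : 1 / Real.cos (k*(θ - a - π)) ^ 2 = 1 + Real.tan (k*(θ - a - π))^2 := by
        rw [one_div, ← Real.inv_one_add_tan_sq (hcos θ hθ), inv_inv]
      rw [this, hφ]; ring
    rw [hid] at this
    simpa [hφ, Function.comp] using this
  -- continuity of φ on the interval
  have hφc : ContinuousOn φ (Icc a (a+2*π)) := by
    intro θ hθ
    exact (hφd θ hθ).continuousAt.continuousWithinAt
  have hc : Continuous h := hh.continuous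
  have hc' : Continuous (deriv h) := hh.continuous_deriv le_rfl
  have hdiff : ∀ θ : ℝ, HasDerivAt h (deriv h θ) θ :=
    fun θ => (hh.differentiable one_ne_zero θ).hasDerivAt
  -- derivative of ‖h‖²
  have hvd : ∀ θ : ℝ, HasDerivAt (fun θ => ‖h θ‖^2) (2*(inner ℝ (h θ) (deriv h θ) : ℝ)) θ := by
    intro θ
    have := (hdiff θ).inner ℝ (hdiff θ)
    have heq : (fun θ => (inner ℝ (h θ) (h θ) : ℝ)) = fun θ => ‖h θ‖^2 := by
      funext x; exact real_inner_self_eq_norm_sq _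
    rw [heq] at this
    refine this.congr_deriv ?_
    rw [real_inner_comm]; ring
  -- integrability facts
  have ih2 : IntervalIntegrable (fun θ => ‖h θ‖^2) volume a (a+2*π) :=
    ((hc.norm.pow 2)).intervalIntegrable _ _
  have ih'2 : IntervalIntegrable (fun θ => ‖deriv h θ‖^2) volume a (a+2*π) :=
    ((hc'.norm.pow 2)).intervalIntegrable _ _
  have iφ' : IntervalIntegrable (fun θ => -(k^2 + (φ θ)^2)) volume a (a+2*π) := by
    apply ContinuousOn.intervalIntegrable
    rw [huIcc]
    exact ((continuousOn_const.add (hφc.pow 2)).neg)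
  have iv' : IntervalIntegrable (fun θ => 2*(inner ℝ (h θ) (deriv h θ) : ℝ)) volume a (a+2*π) :=
    ((continuous_const.mul (hc.inner hc')).intervalIntegrable _ _)
  have iφv' : IntervalIntegrable (fun θ => φ θ * (2*(inner ℝ (h θ) (deriv h θ) : ℝ)))
      volume a (a+2*π) := by
    apply ContinuousOn.intervalIntegrable
    rw [huIcc]
    exact hφc.mul ((continuous_const.mul (hc.inner hc')).continuousOn)
  have iφ2v : IntervalIntegrable (fun θ => (φ θ)^2 * ‖h θ‖^2) volume a (a+2*π) := by
    apply ContinuousOn.intervalIntegrable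
    rw [huIcc]
    exact (hφc.pow 2).mul ((hc.norm.pow 2).continuousOn)
  have iφ'v : IntervalIntegrable (fun θ => -(k^2 + (φ θ)^2) * ‖h θ‖^2) volume a (a+2*π) := by
    apply ContinuousOn.intervalIntegrable
    rw [huIcc]
    exact ((continuousOn_const.add (hφc.pow 2)).neg).mul ((hc.norm.pow 2).continuousOn)
  -- integration by parts
  have ibp : ∫ θ in a..(a+2*π), φ θ * (2*(inner ℝ (h θ) (deriv h θ) : ℝ))
      = - ∫ θ in a..(a+2*π), -(k^2 + (φ θ)^2) * ‖h θ‖^2 := by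
    have := intervalIntegral.integral_mul_deriv_eq_deriv_mul
      (u := φ) (u' := fun θ => -(k^2 + (φ θ)^2))
      (v := fun θ => ‖h θ‖^2) (v' := fun θ => 2*(inner ℝ (h θ) (deriv h θ) : ℝ))
      (fun x hx => hφd x (huIcc ▸ hx)) (fun x hx => hvd x) iφ' iv'
    rw [this]
    simp [h0, h1]
  -- expanding the square
  have key : 0 ≤ ∫ θ in a..(a+2*π), ‖deriv h θ - φ θ • h θ‖^2 :=
    intervalIntegral.integral_nonneg hab (fun u _ => sq_nonneg _)
  have expand : ∀ θ, ‖deriv h θ - φ θ • h θ‖^2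
      = ‖deriv h θ‖^2 - φ θ * (2*(inner ℝ (h θ) (deriv h θ) : ℝ)) + (φ θ)^2 * ‖h θ‖^2 := by
    intro θ
    rw [norm_sub_sq_real, real_inner_smul_right, norm_smul]
    rw [real_inner_comm, mul_pow, Real.norm_eq_abs, sq_abs]
    ring
  rw [intervalIntegral.integral_congr (g := fun θ =>
      ‖deriv h θ‖^2 - φ θ * (2*(inner ℝ (h θ) (deriv h θ) : ℝ)) + (φ θ)^2 * ‖h θ‖^2)
      (fun θ _ => expand θ)] at key
  rw [intervalIntegral.integral_add (ih'2.sub iφv') iφ2v,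
      intervalIntegral.integral_sub ih'2 iφv', ibp] at key
  have combine : (∫ θ in a..(a+2*π), -(k^2 + (φ θ)^2) * ‖h θ‖^2)
      + ∫ θ in a..(a+2*π), (φ θ)^2 * ‖h θ‖^2
      = -(k^2) * ∫ θ in a..(a+2*π), ‖h θ‖^2 := by
    rw [← intervalIntegral.integral_add iφ'v iφ2v, ← intervalIntegral.integral_const_mul]
    apply intervalIntegral.integral_congr
    intro θ _
    ring
  have : 0 ≤ (∫ θ in a..(a+2*π), ‖deriv h θ‖^2) + (-(k^2) * ∫ θ in a..(a+2*π), ‖h θ‖^2) := by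
    rw [← combine]; linarith [key]
  rw [hk2] at this
  linarith

/-- Energy bound for the interpolating annulus map (Lemma `l:approx`, case `R = 1`):
with `ŵ(r,θ) = f(θ) + ((r+ρ-1)/ρ)(g(θ)-f(θ))` on `B₁ \ B_{1-ρ}`, the Dirichlet energy
`∫ |∇ŵ|² = ∫_{1-ρ}^1 r (∫_{S¹} |∂_r ŵ|² + r^{-2}|∂_θ ŵ|²)` is bounded by
`(17/√2)·(∫|f'-g'|² · ∫(|f'|²+|g'|²))^{1/2}`. -/
theorem stmt_8 (N : ℕ) (f g : ℝ → EuclideanSpace ℝ (Fin N)) (ρ : ℝ)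
    (hf : ContDiff ℝ 1 f) (hg : ContDiff ℝ 1 g)
    (hfp : Function.Periodic f (2*π)) (hgp : Function.Periodic g (2*π))
    (hagree : ∃ θ₀, f θ₀ = g θ₀)
    (hden : 0 < ∫ θ in (0:ℝ)..(2*π), (‖deriv f θ‖^2 + ‖deriv g θ‖^2))
    (hρpos : 0 < ρ)
    (hρ : ρ^2 = (∫ θ in (0:ℝ)..(2*π), ‖deriv f θ - deriv g θ‖^2) /
      (8 * ∫ θ in (0:ℝ)..(2*π), (‖deriv f θ‖^2 + ‖deriv g θ‖^2))) :
    (∫ r in (1-ρ)..(1:ℝ), r * ∫ θ in (0:ℝ)..(2*π),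
        (‖(1/ρ) • (g θ - f θ)‖^2 +
          (r⁻¹)^2 * ‖deriv f θ + ((r + ρ - 1)/ρ) • (deriv g θ - deriv f θ)‖^2)) ≤
      (17 / Real.sqrt 2) *
        Real.sqrt ((∫ θ in (0:ℝ)..(2*π), ‖deriv f θ - deriv g θ‖^2) *
          (∫ θ in (0:ℝ)..(2*π), (‖deriv f θ‖^2 + ‖deriv g θ‖^2))) := by
  obtain ⟨θ₀, hθ₀⟩ := hagree
  have hπ := Real.pi_pos
  set A := ∫ θ in (0:ℝ)..(2*π), ‖deriv f θ - deriv g θ‖^2 with hAdef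
  set B := ∫ θ in (0:ℝ)..(2*π), (‖deriv f θ‖^2 + ‖deriv g θ‖^2) with hBdef
  have hdf : Differentiable ℝ f := hf.differentiable one_ne_zero
  have hdg : Differentiable ℝ g := hg.differentiable one_ne_zero
  have cf' : Continuous (deriv f) := hf.continuous_deriv le_rfl
  have cg' : Continuous (deriv g) := hg.continuous_deriv le_rfl
  have cf : Continuous f := hf.continuous
  have cg : Continuous g := hg.continuous
  -- the difference function
  set d : ℝ → EuclideanSpace ℝ (Fin N) := fun θ => g θ - f θ with hddef
  have hd : ContDiff ℝ 1 d := hg.sub hf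
  have hd' : ∀ θ, deriv d θ = deriv g θ - deriv f θ := fun θ => deriv_sub (hdg θ) (hdf θ)
  have hdp : Function.Periodic d (2*π) := hgp.sub hfp
  have hdp' : Function.Periodic (deriv d) (2*π) := by
    intro θ
    have heq : (fun x => d (x + 2*π)) = d := funext fun x => hdp x
    calc deriv d (θ + 2*π) = deriv (fun x => d (x + 2*π)) θ :=
          (deriv_comp_add_const d (2*π) θ).symm
      _ = deriv d θ := by rw [heq]
  set P := ∫ θ in (0:ℝ)..(2*π), ‖g θ - f θ‖^2 with hPdef
  have hPnn : 0 ≤ P :=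
    intervalIntegral.integral_nonneg (by positivity) (fun _ _ => sq_nonneg _)
  -- Poincaré inequality: P ≤ 33/8 * A
  have hshift1 : P = ∫ θ in θ₀..(θ₀+2*π), ‖d θ‖^2 := by
    have hper : Function.Periodic (fun θ => ‖d θ‖^2) (2*π) := fun θ => by simp [hdp θ]
    have h2 := hper.intervalIntegral_add_eq θ₀ 0
    rw [zero_add] at h2
    rw [hPdef, ← h2]
  have hshift2 : A = ∫ θ in θ₀..(θ₀+2*π), ‖deriv d θ‖^2 := by
    have hper : Function.Periodic (fun θ => ‖deriv d θ‖^2) (2*π) := fun θ => by simp [hdp' θ]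
    have h2 := hper.intervalIntegral_add_eq θ₀ 0
    rw [zero_add] at h2
    rw [hAdef,
      show (∫ θ in (0:ℝ)..(2*π), ‖deriv f θ - deriv g θ‖^2)
          = ∫ θ in (0:ℝ)..(2*π), ‖deriv d θ‖^2 from
        intervalIntegral.integral_congr (fun θ _ => by rw [hd' θ, norm_sub_rev]),
      ← h2]
  have hd0 : d θ₀ = 0 := by rw [hddef]; simp [hθ₀]
  have hd1 : d (θ₀ + 2*π) = 0 := (hdp θ₀).trans hd0
  have hw := poincare833 d hd θ₀ hd0 hd1
  rw [← hshift1, ← hshift2] at hw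
  have hPA : P ≤ 33/8 * A := by linarith
  -- basic facts about ρ, A, B
  have hB0 : 0 < B := hden
  have hA8 : A = 8 * B * ρ^2 := by
    rw [hρ]; field_simp [ne_of_gt hB0]
  have hAB2 : A ≤ 2 * B := by
    have hmono : A ≤ ∫ θ in (0:ℝ)..(2*π), 2*(‖deriv f θ‖^2 + ‖deriv g θ‖^2) := by
      rw [hAdef]
      apply intervalIntegral.integral_mono_on (by positivity)
      · exact (((cf'.sub cg').norm.pow 2)).intervalIntegrable _ _
      · exact (continuous_const.mul
          ((cf'.norm.pow 2).add (cg'.norm.pow 2))).intervalIntegrable _ _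
      · intro θ _
        have h1 : ‖deriv f θ - deriv g θ‖ ≤ ‖deriv f θ‖ + ‖deriv g θ‖ := norm_sub_le _ _
        have h2 := pow_le_pow_left₀ (norm_nonneg _) h1 2
        nlinarith [sq_nonneg (‖deriv f θ‖ - ‖deriv g θ‖)]
    rw [intervalIntegral.integral_const_mul, ← hBdef] at hmono
    linarith
  have hρ2 : ρ^2 ≤ 1/4 := by nlinarith [hB0]
  have hρhalf : ρ ≤ 1/2 := by nlinarith [hρpos]
  have h1ρ : (0:ℝ) < 1 - ρ := by linarith
  -- the coefficients of the θ-derivative energy as a polynomial in s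
  set a0 := ∫ θ in (0:ℝ)..(2*π), ‖deriv f θ‖^2 with ha0def
  set a1 := ∫ θ in (0:ℝ)..(2*π), (inner ℝ (deriv f θ) (deriv g θ - deriv f θ) : ℝ) with ha1def
  set a2 := ∫ θ in (0:ℝ)..(2*π), ‖deriv g θ - deriv f θ‖^2 with ha2def
  have int1 : IntervalIntegrable (fun θ => ‖deriv f θ‖^2) MeasureTheory.volume 0 (2*π) :=
    (cf'.norm.pow 2).intervalIntegrable _ _
  have cinner : Continuous (fun θ => (inner ℝ (deriv f θ) (deriv g θ - deriv f θ) : ℝ)) :=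
    cf'.inner (cg'.sub cf')
  have hq : ∀ s : ℝ, (∫ θ in (0:ℝ)..(2*π), ‖deriv f θ + s • (deriv g θ - deriv f θ)‖^2)
      = a0 + 2*s*a1 + s^2*a2 := by
    intro s
    have point : ∀ θ : ℝ, ‖deriv f θ + s • (deriv g θ - deriv f θ)‖^2
        = ‖deriv f θ‖^2 + (2*s)*(inner ℝ (deriv f θ) (deriv g θ - deriv f θ) : ℝ)
          + s^2*‖deriv g θ - deriv f θ‖^2 := by
      intro θ
      rw [norm_add_sq_real, real_inner_smul_right, norm_smul, mul_pow,
        Real.norm_eq_abs, sq_abs]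
      ring
    rw [intervalIntegral.integral_congr (g := fun θ =>
        ‖deriv f θ‖^2 + (2*s)*(inner ℝ (deriv f θ) (deriv g θ - deriv f θ) : ℝ)
          + s^2*‖deriv g θ - deriv f θ‖^2) (fun θ _ => point θ)]
    rw [intervalIntegral.integral_add (f := fun θ => ‖deriv f θ‖^2 + (2*s)*(inner ℝ (deriv f θ) (deriv g θ - deriv f θ) : ℝ))
        (g := fun θ => s^2*‖deriv g θ - deriv f θ‖^2) (int1.add
        ((show Continuous fun θ => (2*s) * (inner ℝ (deriv f θ) (deriv g θ - deriv f θ) : ℝ) from continuous_const.mul cinner).intervalIntegrable _ _))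
        ((show Continuous fun θ => s^2 * ‖deriv g θ - deriv f θ‖^2 from continuous_const.mul ((cg'.sub cf').norm.pow 2)).intervalIntegrable _ _),
      intervalIntegral.integral_add (f := fun θ => ‖deriv f θ‖^2)
        (g := fun θ => (2*s)*(inner ℝ (deriv f θ) (deriv g θ - deriv f θ) : ℝ)) int1 ((show Continuous fun θ => (2*s) * (inner ℝ (deriv f θ) (deriv g θ - deriv f θ) : ℝ) from continuous_const.mul cinner).intervalIntegrable _ _),
      intervalIntegral.integral_const_mul, intervalIntegral.integral_const_mul]
  have hqle : ∀ s : ℝ, 0 ≤ s → s ≤ 1 → a0 + 2*s*a1 + s^2*a2 ≤ B := by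
    intro s hs0 hs1
    rw [← hq s, hBdef]
    apply intervalIntegral.integral_mono_on (by positivity)
    · exact ((cf'.add ((cg'.sub cf').const_smul s)).norm.pow 2).intervalIntegrable _ _
    · exact ((cf'.norm.pow 2).add (cg'.norm.pow 2)).intervalIntegrable _ _
    · intro θ _
      have hrepr : deriv f θ + s • (deriv g θ - deriv f θ)
          = (1-s) • deriv f θ + s • deriv g θ := by module
      rw [hrepr]
      have h1 : ‖(1-s) • deriv f θ + s • deriv g θ‖
          ≤ (1-s)*‖deriv f θ‖ + s*‖deriv g θ‖ := by
        refine (norm_add_le _ _).trans ?_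
        rw [norm_smul, norm_smul, Real.norm_eq_abs, Real.norm_eq_abs,
          abs_of_nonneg (by linarith), abs_of_nonneg hs0]
      have h2 := pow_le_pow_left₀ (norm_nonneg _) h1 2
      refine h2.trans ?_
      nlinarith [norm_nonneg (deriv f θ), norm_nonneg (deriv g θ),
        mul_nonneg (mul_nonneg hs0 (by linarith : (0:ℝ) ≤ 1-s))
          (sq_nonneg (‖deriv f θ‖ - ‖deriv g θ‖)),
        sq_nonneg (‖deriv f θ‖ - ‖deriv g θ‖)]
  -- rewriting the inner integral
  have F_eq : ∀ r : ℝ, (∫ θ in (0:ℝ)..(2*π),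
      (‖(1/ρ) • (g θ - f θ)‖^2 +
        (r⁻¹)^2 * ‖deriv f θ + ((r + ρ - 1)/ρ) • (deriv g θ - deriv f θ)‖^2))
      = (1/ρ)^2*P + (r⁻¹)^2*(a0 + 2*((r+ρ-1)/ρ)*a1 + ((r+ρ-1)/ρ)^2*a2) := by
    intro r
    have intS : IntervalIntegrable (fun θ => ‖(1/ρ) • (g θ - f θ)‖^2)
        MeasureTheory.volume 0 (2*π) :=
      (((cg.sub cf).const_smul ((1:ℝ)/ρ)).norm.pow 2).intervalIntegrable _ _
    have intT : IntervalIntegrable (fun θ =>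
        (r⁻¹)^2 * ‖deriv f θ + ((r+ρ-1)/ρ) • (deriv g θ - deriv f θ)‖^2)
        MeasureTheory.volume 0 (2*π) :=
      (by fun_prop : Continuous fun θ =>
        (r⁻¹)^2 * ‖deriv f θ + ((r+ρ-1)/ρ) • (deriv g θ - deriv f θ)‖^2).intervalIntegrable _ _
    rw [intervalIntegral.integral_add intS intT]
    congr 1
    · rw [intervalIntegral.integral_congr (g := fun θ => (1/ρ)^2 * ‖g θ - f θ‖^2)
        (fun θ _ => by rw [norm_smul, mul_pow, Real.norm_eq_abs, sq_abs])]
      rw [intervalIntegral.integral_const_mul, hPdef]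
    · rw [intervalIntegral.integral_const_mul, hq ((r+ρ-1)/ρ)]
  -- continuity on [1-ρ, 1]
  have hab2 : 1 - ρ ≤ (1:ℝ) := by linarith
  have huIcc2 : uIcc (1-ρ) (1:ℝ) = Icc (1-ρ) 1 := uIcc_of_le hab2
  have hne0 : ∀ r ∈ Icc (1-ρ) (1:ℝ), r ≠ 0 := fun r hr =>
    (lt_of_lt_of_le h1ρ hr.1).ne'
  have cpoly : Continuous (fun r : ℝ => a0 + 2*((r+ρ-1)/ρ)*a1 + ((r+ρ-1)/ρ)^2*a2) := by
    fun_prop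
  have cinv : ContinuousOn (fun r : ℝ => r⁻¹) (Icc (1-ρ) (1:ℝ)) :=
    ContinuousOn.inv₀ continuousOn_id hne0
  have cF : ContinuousOn (fun r : ℝ =>
      r * ((1/ρ)^2*P + (r⁻¹)^2*(a0 + 2*((r+ρ-1)/ρ)*a1 + ((r+ρ-1)/ρ)^2*a2)))
      (Icc (1-ρ) 1) :=
    continuousOn_id.mul (continuousOn_const.add ((cinv.pow 2).mul cpoly.continuousOn))
  have cH : ContinuousOn (fun r : ℝ => ((1/ρ)^2*P)*r + B*r⁻¹) (Icc (1-ρ) 1) :=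
    (continuousOn_const.mul continuousOn_id).add (continuousOn_const.mul cinv)
  -- main estimate
  calc (∫ r in (1-ρ)..(1:ℝ), r * ∫ θ in (0:ℝ)..(2*π),
        (‖(1/ρ) • (g θ - f θ)‖^2 +
          (r⁻¹)^2 * ‖deriv f θ + ((r + ρ - 1)/ρ) • (deriv g θ - deriv f θ)‖^2))
      = ∫ r in (1-ρ)..(1:ℝ),
          r * ((1/ρ)^2*P + (r⁻¹)^2*(a0 + 2*((r+ρ-1)/ρ)*a1 + ((r+ρ-1)/ρ)^2*a2)) :=
        intervalIntegral.integral_congr (fun r _ => by rw [F_eq r])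
    _ ≤ ∫ r in (1-ρ)..(1:ℝ), (((1/ρ)^2*P)*r + B*r⁻¹) := by
        apply intervalIntegral.integral_mono_on hab2
          (ContinuousOn.intervalIntegrable (by rw [huIcc2]; exact cF))
          (ContinuousOn.intervalIntegrable (by rw [huIcc2]; exact cH))
        intro r hr
        have hr0 : 0 < r := lt_of_lt_of_le h1ρ hr.1
        have hs0 : 0 ≤ (r+ρ-1)/ρ := div_nonneg (by linarith [hr.1]) hρpos.le
        have hs1 : (r+ρ-1)/ρ ≤ 1 := by rw [div_le_one hρpos]; linarith [hr.2]
        have hQ := hqle _ hs0 hs1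
        have hrinv : r * (r⁻¹)^2 = r⁻¹ := by rw [sq, ← mul_assoc, mul_inv_cancel₀ hr0.ne', one_mul]
        have step : r⁻¹ * (a0 + 2*((r+ρ-1)/ρ)*a1 + ((r+ρ-1)/ρ)^2*a2) ≤ B * r⁻¹ := by
          rw [mul_comm B r⁻¹]
          exact mul_le_mul_of_nonneg_left hQ (inv_nonneg.mpr hr0.le)
        calc r * ((1/ρ)^2*P + (r⁻¹)^2*(a0 + 2*((r+ρ-1)/ρ)*a1 + ((r+ρ-1)/ρ)^2*a2))
            = ((1/ρ)^2*P)*r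
              + (r*(r⁻¹)^2)*(a0 + 2*((r+ρ-1)/ρ)*a1 + ((r+ρ-1)/ρ)^2*a2) := by ring
          _ = ((1/ρ)^2*P)*r
              + r⁻¹*(a0 + 2*((r+ρ-1)/ρ)*a1 + ((r+ρ-1)/ρ)^2*a2) := by rw [hrinv]
          _ ≤ ((1/ρ)^2*P)*r + B*r⁻¹ := by linarith [step]
    _ = ((1/ρ)^2*P)*(((1:ℝ)^2 - (1-ρ)^2)/2) + B*Real.log (1/(1-ρ)) := by
        rw [intervalIntegral.integral_add (f := fun r => ((1/ρ)^2*P)*r)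
          (g := fun r => B*r⁻¹)
          (by exact (continuous_const.mul continuous_id).intervalIntegrable _ _)
          (ContinuousOn.intervalIntegrable
            (by rw [huIcc2]; exact continuousOn_const.mul cinv)),
          intervalIntegral.integral_const_mul, intervalIntegral.integral_const_mul,
          integral_id, integral_inv_of_pos h1ρ one_pos]
    _ ≤ 34*ρ*B := by
        have hL : Real.log (1/(1-ρ)) ≤ ρ + 2*ρ^2 := by
          have hlog := Real.log_le_sub_one_of_pos (show (0:ℝ) < 1/(1-ρ) by positivity)
          have hdiv : 1/(1-ρ) ≤ 1 + (ρ + 2*ρ^2) := by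
            rw [div_le_iff₀ h1ρ]; nlinarith
          linarith
        have hP33 : P ≤ 33*B*ρ^2 := by
          rw [hA8] at hPA; linarith
        have h1 : (0:ℝ) ≤ ρ - ρ^2/2 := by nlinarith
        have key1 : (1/ρ)^2*P*(((1:ℝ)^2 - (1-ρ)^2)/2) ≤ 33*B*(ρ - ρ^2/2) := by
          have e : (((1:ℝ)^2 - (1-ρ)^2)/2) = ρ - ρ^2/2 := by ring
          rw [e]
          calc (1/ρ)^2*P*(ρ-ρ^2/2) ≤ (1/ρ)^2*(33*B*ρ^2)*(ρ-ρ^2/2) :=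
                mul_le_mul_of_nonneg_right
                  (mul_le_mul_of_nonneg_left hP33 (by positivity)) h1
            _ = 33*B*(ρ-ρ^2/2) := by field_simp
        have key2 : B*Real.log (1/(1-ρ)) ≤ B*(ρ+2*ρ^2) :=
          mul_le_mul_of_nonneg_left hL hB0.le
        nlinarith [key1, key2, mul_nonneg hB0.le (sq_nonneg ρ)]
    _ = (17 / Real.sqrt 2) * Real.sqrt (A * B) := by
        have hs2 : Real.sqrt 2 ^ 2 = 2 := Real.sq_sqrt (by norm_num)
        have he : (2*Real.sqrt 2*ρ*B)^2 = A*B := by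
          rw [hA8, mul_pow, mul_pow, mul_pow, hs2]; ring
        have hsA : Real.sqrt (A*B) = 2*Real.sqrt 2*ρ*B := by
          rw [← he, Real.sqrt_sq (by positivity)]
        have h17 : 17/Real.sqrt 2 * (2*Real.sqrt 2*ρ*B) = 34*ρ*B := by
          have hs0 : Real.sqrt 2 ≠ 0 := by positivity
          field_simp
          ring
        rw [hsA, h17]
end

section
/- Let u : [r₁, r₂] × S¹ → ℝ^N be a C^2 map into a submanifold M ⊂ ℝ^N (i.e., u(t,θ) ∈ M) that is harmonic, so that u_tt + u_θθ = Δu is normal to M at each point. Then the function t ↦ ∫_{S¹} (|u_t|² - |u_θ|²)(t, θ) dθ is constant in t. -/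
open Real Set intervalIntegral RealInnerProductSpace

/-- For a `C²` harmonic map `u(t,θ)` from a flat cylinder `[r₁,r₂] × S¹` into a
submanifold `M ⊂ ℝᴺ` (with tangent spaces `Tan`), i.e. with `Δu = u_tt + u_θθ`
orthogonal to the tangent space of `M` at `u(t,θ)`, the Hopf-type quantity
`t ↦ ∫_{S¹} (|u_t|² - |u_θ|²) dθ` is constant in `t`. -/
theorem stmt_10 (N : ℕ) (r₁ r₂ : ℝ) (h12 : r₁ < r₂)
    (u : ℝ → ℝ → EuclideanSpace ℝ (Fin N))
    (M : Set (EuclideanSpace ℝ (Fin N)))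
    (Tan : EuclideanSpace ℝ (Fin N) → Submodule ℝ (EuclideanSpace ℝ (Fin N)))
    (hu : ContDiff ℝ 2 (Function.uncurry u))
    (hper : ∀ t, Function.Periodic (u t) (2*π))
    (hmem : ∀ t θ, u t θ ∈ M)
    (htan1 : ∀ t θ, deriv (fun s => u s θ) t ∈ Tan (u t θ))
    (htan2 : ∀ t θ, deriv (fun φ => u t φ) θ ∈ Tan (u t θ))
    (hnormal : ∀ t θ, ∀ v ∈ Tan (u t θ),
      ⟪deriv (deriv (fun s => u s θ)) t + deriv (deriv (fun φ => u t φ)) θ, v⟫ = 0) :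
    ∀ t ∈ Icc r₁ r₂, ∀ t' ∈ Icc r₁ r₂,
      (∫ θ in (0:ℝ)..(2*π),
          (‖deriv (fun s => u s θ) t‖^2 - ‖deriv (fun φ => u t φ) θ‖^2)) =
      ∫ θ in (0:ℝ)..(2*π),
          (‖deriv (fun s => u s θ) t'‖^2 - ‖deriv (fun φ => u t' φ) θ‖^2) := by
  have hUdiff : Differentiable ℝ (Function.uncurry u) := hu.differentiable (by norm_num)
  set A : ℝ × ℝ → (ℝ × ℝ →L[ℝ] EuclideanSpace ℝ (Fin N)) :=
    fderiv ℝ (Function.uncurry u) with hAdef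
  have hA : ContDiff ℝ 1 A := hu.fderiv_right (by norm_num)
  have hAdiff : Differentiable ℝ A := hA.differentiable (by norm_num)
  have hAcont : Continuous A := hA.continuous
  set A2 : ℝ × ℝ → (ℝ × ℝ →L[ℝ] (ℝ × ℝ →L[ℝ] EuclideanSpace ℝ (Fin N))) :=
    fderiv ℝ A with hA2def
  have hA2cont : Continuous A2 := hA.continuous_fderiv (by norm_num)
  set e1 : ℝ × ℝ := (1, 0) with he1
  set e2 : ℝ × ℝ := (0, 1) with he2
  set v₁ : ℝ × ℝ → EuclideanSpace ℝ (Fin N) := fun p => A p e1 with hv1def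
  set v₂ : ℝ × ℝ → EuclideanSpace ℝ (Fin N) := fun p => A p e2 with hv2def
  have hv₁c : Continuous v₁ := hAcont.clm_apply continuous_const
  have hv₂c : Continuous v₂ := hAcont.clm_apply continuous_const
  -- curves
  have hcurve1 : ∀ (t θ : ℝ), HasDerivAt (fun s : ℝ => (s, θ)) e1 t := fun t θ =>
    (hasDerivAt_id t).prodMk (hasDerivAt_const t θ)
  have hcurve2 : ∀ (t θ : ℝ), HasDerivAt (fun φ : ℝ => (t, φ)) e2 θ := fun t θ =>
    (hasDerivAt_const θ t).prodMk (hasDerivAt_id θ)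
  -- first partial derivatives of u
  have hu1 : ∀ (t θ : ℝ), HasDerivAt (fun s => u s θ) (v₁ (t, θ)) t := fun t θ =>
    by have := (hUdiff (t, θ)).hasFDerivAt.comp_hasDerivAt t (hcurve1 t θ); exact this
  have hu2 : ∀ (t θ : ℝ), HasDerivAt (fun φ => u t φ) (v₂ (t, θ)) θ := fun t θ =>
    (hUdiff (t, θ)).hasFDerivAt.comp_hasDerivAt θ (hcurve2 t θ)
  -- derivatives of v₁ and v₂
  have hfv : ∀ (w : ℝ × ℝ) (p : ℝ × ℝ),
      HasFDerivAt (fun q => A q w) ((A2 p).flip w) p := by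
    intro w p
    have h := (hAdiff p).hasFDerivAt.clm_apply (hasFDerivAt_const w p)
    simpa using h
  have hv11 : ∀ (t θ : ℝ), HasDerivAt (fun s => v₁ (s, θ)) (A2 (t, θ) e1 e1) t := fun t θ =>
    by have := (hfv e1 (t, θ)).comp_hasDerivAt t (hcurve1 t θ); exact this
  have hv12 : ∀ (t θ : ℝ), HasDerivAt (fun φ => v₁ (t, φ)) (A2 (t, θ) e2 e1) θ := fun t θ =>
    (hfv e1 (t, θ)).comp_hasDerivAt θ (hcurve2 t θ)
  have hv21 : ∀ (t θ : ℝ), HasDerivAt (fun s => v₂ (s, θ)) (A2 (t, θ) e1 e2) t := fun t θ =>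
    by have := (hfv e2 (t, θ)).comp_hasDerivAt t (hcurve1 t θ); exact this
  have hv22 : ∀ (t θ : ℝ), HasDerivAt (fun φ => v₂ (t, φ)) (A2 (t, θ) e2 e2) θ := fun t θ =>
    (hfv e2 (t, θ)).comp_hasDerivAt θ (hcurve2 t θ)
  -- symmetry of second derivative
  have hsymm : ∀ p : ℝ × ℝ, A2 p e1 e2 = A2 p e2 e1 := fun p =>
    second_derivative_symmetric (fun y => (hUdiff y).hasFDerivAt) (hAdiff p).hasFDerivAt e1 e2
  -- second derivatives of u in terms of A2
  have hutt : ∀ (t θ : ℝ), deriv (deriv (fun s => u s θ)) t = A2 (t, θ) e1 e1 := by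
    intro t θ
    have h : deriv (fun s => u s θ) = fun s => v₁ (s, θ) := funext fun s => (hu1 s θ).deriv
    rw [h]
    exact (hv11 t θ).deriv
  have huθθ : ∀ (t θ : ℝ), deriv (deriv (fun φ => u t φ)) θ = A2 (t, θ) e2 e2 := by
    intro t θ
    have h : deriv (fun φ => u t φ) = fun φ => v₂ (t, φ) := funext fun φ => (hu2 t φ).deriv
    rw [h]
    exact (hv22 t θ).deriv
  -- the integrand F, the auxiliary function g and its θ-derivative dg
  set F : ℝ × ℝ → ℝ := fun p => ⟪v₁ p, v₁ p⟫ - ⟪v₂ p, v₂ p⟫ with hFdef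
  set g : ℝ × ℝ → ℝ := fun p => ⟪v₁ p, v₂ p⟫ with hgdef
  set dg : ℝ × ℝ → ℝ := fun p => ⟪v₁ p, A2 p e2 e2⟫ + ⟪A2 p e2 e1, v₂ p⟫ with hdgdef
  have hFc : Continuous F := (hv₁c.inner hv₁c).sub (hv₂c.inner hv₂c)
  have hA2e : ∀ w z : ℝ × ℝ, Continuous fun p => A2 p w z := fun w z =>
    (hA2cont.clm_apply continuous_const).clm_apply continuous_const
  have hdgc : Continuous dg := (hv₁c.inner (hA2e e2 e2)).add ((hA2e e2 e1).inner hv₂c)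
  have hgθ : ∀ (t θ : ℝ), HasDerivAt (fun φ => g (t, φ)) (dg (t, θ)) θ := fun t θ =>
    (hv12 t θ).inner ℝ (hv22 t θ)
  -- pointwise derivative of F in t
  have hFt : ∀ (t θ : ℝ), HasDerivAt (fun s => F (s, θ)) (-2 * dg (t, θ)) t := by
    intro t θ
    have h1 := ((hv11 t θ).inner ℝ (hv11 t θ)).sub ((hv21 t θ).inner ℝ (hv21 t θ))
    convert h1 using 1
    rotate_left 3
    have hn : ⟪A2 (t, θ) e1 e1 + A2 (t, θ) e2 e2, v₁ (t, θ)⟫ = 0 := by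
      have h := hnormal t θ (deriv (fun s => u s θ) t) (htan1 t θ)
      rw [(hu1 t θ).deriv, hutt t θ, huθθ t θ] at h
      exact h
    rw [inner_add_left] at hn
    have c1 : ⟪v₁ (t, θ), A2 (t, θ) e1 e1⟫ = ⟪A2 (t, θ) e1 e1, v₁ (t, θ)⟫ :=
      real_inner_comm _ _
    have c2 : ⟪v₁ (t, θ), A2 (t, θ) e2 e2⟫ = ⟪A2 (t, θ) e2 e2, v₁ (t, θ)⟫ :=
      real_inner_comm _ _
    have c3 : ⟪v₂ (t, θ), A2 (t, θ) e1 e2⟫ = ⟪A2 (t, θ) e2 e1, v₂ (t, θ)⟫ := by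
      rw [hsymm]; exact real_inner_comm _ _
    have c4 : ⟪A2 (t, θ) e1 e2, v₂ (t, θ)⟫ = ⟪A2 (t, θ) e2 e1, v₂ (t, θ)⟫ := by
      rw [hsymm]
    show -2 * (⟪v₁ (t, θ), A2 (t, θ) e2 e2⟫ + ⟪A2 (t, θ) e2 e1, v₂ (t, θ)⟫) = _
    linarith
    all_goals rfl
  -- periodicity of A in the second variable
  have hAper : ∀ p : ℝ × ℝ, A (p + ((0:ℝ), 2*π)) = A p := by
    intro p
    have hshift : HasFDerivAt (fun q : ℝ × ℝ => q + ((0:ℝ), 2*π))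
        (ContinuousLinearMap.id ℝ (ℝ × ℝ)) p := (hasFDerivAt_id p).add_const _
    have h1 := (hUdiff (p + ((0:ℝ), 2*π))).hasFDerivAt.comp p hshift
    rw [ContinuousLinearMap.comp_id] at h1
    have h2 : HasFDerivAt (Function.uncurry u) (A (p + ((0:ℝ), 2*π))) p := by
      have hfun : (fun q : ℝ × ℝ => Function.uncurry u (q + ((0:ℝ), 2*π))) =
          Function.uncurry u := by
        funext q
        show u (q.1 + 0) (q.2 + 2*π) = u q.1 q.2
        rw [add_zero]
        exact hper q.1 q.2
      rw [← hfun]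
      exact h1
    exact h2.fderiv.symm
  have hv₁per : ∀ t θ : ℝ, v₁ (t, θ + 2*π) = v₁ (t, θ) := by
    intro t θ
    have h : (t, θ + 2*π) = (t, θ) + ((0:ℝ), 2*π) := by simp [Prod.ext_iff]
    show A (t, θ + 2*π) e1 = A (t, θ) e1
    rw [h, hAper]
  have hv₂per : ∀ t θ : ℝ, v₂ (t, θ + 2*π) = v₂ (t, θ) := by
    intro t θ
    have h : (t, θ + 2*π) = (t, θ) + ((0:ℝ), 2*π) := by simp [Prod.ext_iff]
    show A (t, θ + 2*π) e2 = A (t, θ) e2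
    rw [h, hAper]
  -- the θ-integral of dg vanishes
  have hint0 : ∀ t : ℝ, (∫ θ in (0:ℝ)..(2*π), dg (t, θ)) = 0 := by
    intro t
    have h := intervalIntegral.integral_eq_sub_of_hasDerivAt
      (f := fun φ => g (t, φ)) (f' := fun φ => dg (t, φ))
      (fun θ _ => hgθ t θ)
      ((hdgc.comp (continuous_const.prodMk continuous_id)).intervalIntegrable 0 (2*π))
    rw [h]
    have hgper : g (t, 2*π) = g (t, 0) := by
      have h0 : (2*π : ℝ) = 0 + 2*π := (zero_add _).symm
      rw [h0]
      show ⟪v₁ (t, 0 + 2*π), v₂ (t, 0 + 2*π)⟫ = ⟪v₁ (t, 0), v₂ (t, 0)⟫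
      rw [hv₁per, hv₂per]
    show g (t, 2*π) - g (t, 0) = 0
    rw [hgper, sub_self]
  -- the function whose constancy we prove
  set f : ℝ → ℝ := fun t => ∫ θ in (0:ℝ)..(2*π), F (t, θ) with hfdef
  have hGc : Continuous fun p : ℝ × ℝ => -2 * dg p := continuous_const.mul hdgc
  have hfd : ∀ t₀ : ℝ, HasDerivAt f 0 t₀ := by
    intro t₀
    obtain ⟨C, hC⟩ := (isCompact_Icc.prod isCompact_uIcc :
      IsCompact (Icc (t₀-1) (t₀+1) ×ˢ uIcc (0:ℝ) (2*π))).exists_bound_of_continuousOn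
      hGc.continuousOn
    have key := intervalIntegral.hasDerivAt_integral_of_dominated_loc_of_deriv_le
      (F := fun x θ => F (x, θ)) (F' := fun x θ => -2 * dg (x, θ)) (x₀ := t₀)
      (a := 0) (b := 2*π) (bound := fun _ => C) (s := Metric.ball t₀ 1) (μ := MeasureTheory.volume) (Metric.ball_mem_nhds t₀ one_pos)
      (Filter.Eventually.of_forall fun x =>
        ((hFc.comp (continuous_const.prodMk continuous_id)).aestronglyMeasurable))
      ((hFc.comp (continuous_const.prodMk continuous_id)).intervalIntegrable 0 (2*π))
      ((hGc.comp (continuous_const.prodMk continuous_id)).aestronglyMeasurable)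
      (Filter.Eventually.of_forall (fun θ hθ x hx => by
        refine hC ((x, θ)) ⟨?_, uIoc_subset_uIcc hθ⟩
        have : x ∈ Ioo (t₀ - 1) (t₀ + 1) := by
          rwa [Real.ball_eq_Ioo] at hx
        exact Ioo_subset_Icc_self this))
      intervalIntegrable_const
      (Filter.Eventually.of_forall fun θ _ x _ => hFt x θ)
    have h2 := key.2
    rw [intervalIntegral.integral_const_mul, hint0 t₀, mul_zero] at h2
    exact h2
  -- identify the integrals in the statement with f
  have hrepr : ∀ t : ℝ, (∫ θ in (0:ℝ)..(2*π),
      (‖deriv (fun s => u s θ) t‖^2 - ‖deriv (fun φ => u t φ) θ‖^2)) = f t := by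
    intro t
    apply intervalIntegral.integral_congr
    intro θ _
    show ‖deriv (fun s => u s θ) t‖^2 - ‖deriv (fun φ => u t φ) θ‖^2
        = ⟪v₁ (t, θ), v₁ (t, θ)⟫ - ⟪v₂ (t, θ), v₂ (t, θ)⟫
    rw [(hu1 t θ).deriv, (hu2 t θ).deriv, real_inner_self_eq_norm_sq,
      real_inner_self_eq_norm_sq]
  intro t _ t' _
  rw [hrepr t, hrepr t']
  exact is_const_of_deriv_eq_zero (fun x => (hfd x).differentiableAt)
    (fun x => (hfd x).deriv) t t'
end

section
/- Let u be a C^3 harmonic map from the flat cylinder C_{r₁,r₂} = [r₁,r₂] × S¹ into a compact submanifold M ⊂ ℝ^N with second fundamental form A. Then the function f(t) = ∫_{S¹} |u_θ(t,θ)|² dθ satisfies f''(t) ≥ (3/2)·f(t) - 2·(sup_M |A|²)·∫_{S¹} |∇u(t,θ)|⁴ dθ. -/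
open Real Set intervalIntegral Function Metric MeasureTheory RealInnerProductSpace

section PartialDerivs

variable {E : Type*} [NormedAddCommGroup E] [NormedSpace ℝ E]

lemma partial1_hasDerivAt {F : ℝ × ℝ → E} (hF : Differentiable ℝ F) (t θ : ℝ) :
    HasDerivAt (fun s => F (s, θ)) (fderiv ℝ F (t, θ) ((1:ℝ), (0:ℝ))) t := by
  have h1 : HasDerivAt (fun s : ℝ => (s, θ)) ((1:ℝ), (0:ℝ)) t :=
    (hasDerivAt_id t).prodMk (hasDerivAt_const t θ)
  exact (hF (t, θ)).hasFDerivAt.comp_hasDerivAt t h1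

lemma partial2_hasDerivAt {F : ℝ × ℝ → E} (hF : Differentiable ℝ F) (t θ : ℝ) :
    HasDerivAt (fun φ => F (t, φ)) (fderiv ℝ F (t, θ) ((0:ℝ), (1:ℝ))) θ := by
  have h1 : HasDerivAt (fun φ : ℝ => (t, φ)) ((0:ℝ), (1:ℝ)) θ :=
    (hasDerivAt_const θ t).prodMk (hasDerivAt_id θ)
  exact (hF (t, θ)).hasFDerivAt.comp_hasDerivAt θ h1

lemma contDiff_partial {F : ℝ × ℝ → E} {n m : ℕ} (hF : ContDiff ℝ n F)
    (hmn : (m : WithTop ℕ∞) + 1 ≤ n) (v : ℝ × ℝ) :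
    ContDiff ℝ m (fun p => fderiv ℝ F p v) :=
  (ContinuousLinearMap.apply ℝ E v).contDiff.comp (hF.fderiv_right hmn)

lemma symm_partial {G : ℝ × ℝ → E} (hG : ContDiff ℝ 2 G) (p : ℝ × ℝ) (v w : ℝ × ℝ) :
    fderiv ℝ (fun q => fderiv ℝ G q v) p w = fderiv ℝ (fun q => fderiv ℝ G q w) p v := by
  have hdG : Differentiable ℝ G := hG.differentiable two_ne_zero
  have hdG' : Differentiable ℝ (fderiv ℝ G) :=
    (hG.fderiv_right (by norm_num)).differentiable one_ne_zero
  have key : ∀ (a : ℝ × ℝ), fderiv ℝ (fun q => fderiv ℝ G q a) p =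
      (ContinuousLinearMap.apply ℝ E a).comp (fderiv ℝ (fderiv ℝ G) p) := fun a =>
    ((ContinuousLinearMap.apply ℝ E a).hasFDerivAt.comp p (hdG' p).hasFDerivAt).fderiv
  rw [key, key]
  simp only [ContinuousLinearMap.coe_comp', Function.comp_apply,
    ContinuousLinearMap.apply_apply]
  exact second_derivative_symmetric (fun y => (hdG y).hasFDerivAt) (hdG' p).hasFDerivAt w v

lemma fderiv_periodic {G : ℝ × ℝ → E} (hG : Differentiable ℝ G) (c : ℝ × ℝ)
    (h : ∀ p, G (p + c) = G p) (p : ℝ × ℝ) : fderiv ℝ G (p + c) = fderiv ℝ G p := by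
  have h1 : HasFDerivAt (fun q => G (q + c)) (fderiv ℝ G (p + c)) p := by
    have h2 := (hG (p + c)).hasFDerivAt.comp p ((hasFDerivAt_id p).add_const c)
    exact h2
  have h2 : (fun q => G (q + c)) = G := funext h
  rw [h2] at h1
  exact (h1.fderiv).symm

end PartialDerivs
lemma hasDerivAt_param {h : ℝ → ℝ → ℝ} (hh : ContDiff ℝ 1 (Function.uncurry h)) (b t : ℝ) :
    HasDerivAt (fun s => ∫ θ in (0:ℝ)..b, h s θ)
      (∫ θ in (0:ℝ)..b, deriv (fun s => h s θ) t) t := by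
  set h' : ℝ × ℝ → ℝ := fun p => fderiv ℝ (Function.uncurry h) p ((1:ℝ), (0:ℝ)) with hh'
  have hdiff : ∀ s θ : ℝ, HasDerivAt (fun s => h s θ) (h' (s, θ)) s := fun s θ =>
    partial1_hasDerivAt (hh.differentiable one_ne_zero) s θ
  have hcont : Continuous h' :=
    (contDiff_partial (n := 1) (m := 0) hh (by norm_num) _).continuous
  -- bound on compact set
  obtain ⟨C, hC⟩ := (((isCompact_Icc (a := t - 1) (b := t + 1)).prod
    (isCompact_uIcc (a := (0:ℝ)) (b := b)))).exists_bound_of_continuousOn hcont.continuousOn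
  have key := intervalIntegral.hasDerivAt_integral_of_dominated_loc_of_deriv_le
    (F := fun s θ => h s θ) (F' := fun s θ => h' (s, θ)) (x₀ := t) (a := 0) (b := b)
    (bound := fun _ => C) (μ := MeasureTheory.volume) (s := ball t 1) (ball_mem_nhds t one_pos)
    (Filter.Eventually.of_forall fun x =>
      ((hh.continuous.comp (Continuous.prodMk_right x)).aestronglyMeasurable))
    ((hh.continuous.comp (Continuous.prodMk_right t)).intervalIntegrable _ _)
    ((hcont.comp (Continuous.prodMk_right t)).aestronglyMeasurable)
    (Filter.Eventually.of_forall fun θ hθ x hx => by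
      refine hC (x, θ) ⟨?_, ?_⟩
      · have := mem_ball_iff_norm.mp hx
        constructor <;> [linarith [neg_le_of_abs_le (le_of_lt this)];
          linarith [le_of_abs_le (le_of_lt this)]]
      · exact uIoc_subset_uIcc hθ)
    (intervalIntegrable_const)
    (Filter.Eventually.of_forall fun θ hθ x hx => hdiff x θ)
  have h2 := key.2
  have : (∫ θ in (0:ℝ)..b, deriv (fun s => h s θ) t) = ∫ θ in (0:ℝ)..b, h' (t, θ) := by
    refine intervalIntegral.integral_congr fun θ hθ => ?_
    exact (hdiff t θ).deriv
  rw [this]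
  exact h2

section WirtingerSection
open AddCircle Complex

lemma two_pi_pos' : (0:ℝ) < 2*π := by positivity

lemma parseval_aux {f : ℝ → ℂ} (hf : Continuous f) (hperf : Function.Periodic f (2*π)) :
    Summable (fun n : ℤ => ‖fourierCoeffOn two_pi_pos' f n‖^2) ∧
    (∫ θ in (0:ℝ)..(2*π), ‖f θ‖^2) =
      (2*π) * ∑' n : ℤ, ‖fourierCoeffOn two_pi_pos' f n‖^2 := by
  haveI : Fact ((0:ℝ) < 2*π) := ⟨two_pi_pos'⟩
  set G : C(AddCircle (2*π), ℂ) :=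
    ⟨liftIco (2*π) 0 f, liftIco_continuous (by simpa using (hperf 0).symm)
      hf.continuousOn⟩ with hG
  set fL := ContinuousMap.toLp (E := ℂ) 2 haarAddCircle ℂ G with hGL
  have hcoeff : ∀ n : ℤ, fourierCoeff (fL : AddCircle (2*π) → ℂ) n =
      fourierCoeffOn two_pi_pos' f n := by
    intro n
    rw [fourierCoeff_toLp]
    have := fourierCoeff_liftIco_eq (T := 2*π) (a := 0) f n
    simp only [zero_add] at this
    rw [show (G : AddCircle (2*π) → ℂ) = liftIco (2*π) 0 f from rfl, this]
  -- summability
  have hsum : Summable (fun n : ℤ => ‖fourierCoeffOn two_pi_pos' f n‖^2) := by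
    have h1 : Memℓp (fun i => fourierBasis.repr fL i) 2 := lp.memℓp _
    have h2 := h1.summable (by norm_num)
    have h3 : ∀ i : ℤ, ‖fourierBasis.repr fL i‖ ^ ((2:ENNReal).toReal) =
        ‖fourierCoeffOn two_pi_pos' f i‖^2 := by
      intro i
      rw [fourierBasis_repr, hcoeff]
      norm_num [Real.rpow_natCast]
    exact h2.congr h3
  refine ⟨hsum, ?_⟩
  -- Parseval
  have hpars := tsum_sq_fourierCoeff fL
  simp_rw [hcoeff] at hpars
  -- relate integrals
  have hae : (fun t => ‖fL t‖^2) =ᵐ[haarAddCircle] fun t => ‖(G : AddCircle (2*π) → ℂ) t‖^2 := by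
    filter_upwards [ContinuousMap.coeFn_toLp (p := 2) haarAddCircle (𝕜 := ℂ) G] with t ht
    rw [ht]
  rw [integral_congr_ae hae] at hpars
  have hvol : ∫ t : AddCircle (2*π), ‖(G : AddCircle (2*π) → ℂ) t‖^2
      = (2*π) * ∫ t : AddCircle (2*π), ‖(G : AddCircle (2*π) → ℂ) t‖^2 ∂haarAddCircle := by
    rw [show (volume : Measure (AddCircle (2*π))) = ENNReal.ofReal (2*π) • haarAddCircle from
        volume_eq_smul_haarAddCircle, MeasureTheory.integral_smul_measure,
      ENNReal.toReal_ofReal two_pi_pos'.le, smul_eq_mul]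
  have hpre := AddCircle.intervalIntegral_preimage (2*π) 0
      (fun z : AddCircle (2*π) => ‖(G : AddCircle (2*π) → ℂ) z‖^2)
  simp only [zero_add] at hpre
  have hcongr : (∫ θ in (0:ℝ)..(2*π), ‖(G : AddCircle (2*π) → ℂ) (θ:ℝ)‖^2)
      = ∫ θ in (0:ℝ)..(2*π), ‖f θ‖^2 := by
    refine intervalIntegral.integral_congr_ae ?_
    have hne : ∀ᵐ x : ℝ, x ≠ 2*π := by
      refine ae_iff.mpr ?_
      simpa using measure_singleton (2*π : ℝ)
    filter_upwards [hne] with x hx hmem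
    rw [uIoc_of_le two_pi_pos'.le] at hmem
    have hx' : x ∈ Ico (0:ℝ) (0 + 2*π) := by
      rw [zero_add]
      exact ⟨hmem.1.le, lt_of_le_of_ne hmem.2 hx⟩
    rw [show (G : AddCircle (2*π) → ℂ) = liftIco (2*π) 0 f from rfl, liftIco_coe_apply hx']
  rw [← hcongr, hpre, hvol, hpars]

lemma periodic_deriv' {E : Type*} [NormedAddCommGroup E] [NormedSpace ℝ E]
    {f : ℝ → E} (hf : Function.Periodic f (2*π)) : Function.Periodic (deriv f) (2*π) := by
  intro x
  have : (fun y => f (y + 2*π)) = f := funext fun y => hf y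
  calc deriv f (x + 2*π) = deriv (fun y => f (y + 2*π)) x := (deriv_comp_add_const f (2*π) x).symm
  _ = deriv f x := by rw [this]

lemma wirtinger_C {g : ℝ → ℂ} (hg : ContDiff ℝ 1 g) (hper : Function.Periodic g (2*π))
    (h0 : (∫ θ in (0:ℝ)..(2*π), g θ) = 0) :
    (∫ θ in (0:ℝ)..(2*π), ‖g θ‖^2) ≤ ∫ θ in (0:ℝ)..(2*π), ‖deriv g θ‖^2 := by
  have hg'c : Continuous (deriv g) := hg.continuous_deriv le_rfl
  obtain ⟨hsum, heq⟩ := parseval_aux hg.continuous hper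
  obtain ⟨hsum', heq'⟩ := parseval_aux hg'c (periodic_deriv' hper)
  rw [heq, heq']
  have hc0 : fourierCoeffOn two_pi_pos' g 0 = 0 := by
    rw [fourierCoeffOn_eq_integral]
    simp [h0]
  have hrel : ∀ n : ℤ, n ≠ 0 →
      fourierCoeffOn two_pi_pos' (deriv g) n = (I * n) * fourierCoeffOn two_pi_pos' g n := by
    intro n hn
    have := fourierCoeffOn_of_hasDerivAt two_pi_pos' hn
      (fun x _ => (hg.differentiable one_ne_zero x).hasDerivAt)
      (hg'c.intervalIntegrable _ _)
    have hgg : g (2*π) = g 0 := by simpa using hper 0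
    rw [hgg] at this
    simp only [sub_self, mul_zero, zero_sub, sub_zero] at this
    have hπ : (π:ℂ) ≠ 0 := Complex.ofReal_ne_zero.mpr Real.pi_ne_zero
    have hn' : ((n:ℤ):ℂ) ≠ 0 := Int.cast_ne_zero.mpr hn
    field_simp at this
    have h2 : (2*(π:ℂ)) ≠ 0 := by simp [hπ]
    refine mul_right_cancel₀ h2 ?_
    linear_combination (norm := (push_cast; ring)) (-1 : ℂ) * this
  refine mul_le_mul_of_nonneg_left (Summable.tsum_le_tsum ?_ hsum hsum') two_pi_pos'.le
  intro n
  rcases eq_or_ne n 0 with rfl | hn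
  · rw [hc0]; simp [sq_nonneg]
  · rw [hrel n hn, norm_mul]
    have h1 : (1:ℝ) ≤ ‖(I * (n:ℂ))‖ := by
      rw [norm_mul, Complex.norm_I, one_mul]
      have : (1:ℝ) ≤ |(n:ℝ)| := by
        exact_mod_cast Int.one_le_abs (by exact_mod_cast hn)
      simpa using this
    have h2 : (0:ℝ) ≤ ‖fourierCoeffOn two_pi_pos' g n‖ := norm_nonneg _
    have h3 : (1:ℝ) ≤ ‖I*(n:ℂ)‖^2 := by nlinarith
    rw [mul_pow]
    nlinarith [sq_nonneg (‖fourierCoeffOn two_pi_pos' g n‖), h3]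

lemma wirtinger_E {N : ℕ} {g : ℝ → EuclideanSpace ℝ (Fin N)} (hg : ContDiff ℝ 1 g)
    (hper : Function.Periodic g (2*π)) (h0 : (∫ θ in (0:ℝ)..(2*π), g θ) = 0) :
    (∫ θ in (0:ℝ)..(2*π), ‖g θ‖^2) ≤ ∫ θ in (0:ℝ)..(2*π), ‖deriv g θ‖^2 := by
  have hgc : Continuous g := hg.continuous
  have hg'c : Continuous (deriv g) := hg.continuous_deriv le_rfl
  set gj : Fin N → ℝ → ℂ := fun j θ => ((g θ j : ℝ) : ℂ) with hgj_def
  have hd : ∀ (j : Fin N) (θ : ℝ), HasDerivAt (gj j) ((deriv g θ j : ℝ) : ℂ) θ := by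
    intro j θ
    have pj : EuclideanSpace ℝ (Fin N) →L[ℝ] ℝ := EuclideanSpace.proj j
    have h1 : HasDerivAt g (deriv g θ) θ := (hg.differentiable one_ne_zero θ).hasDerivAt
    have h2 := (EuclideanSpace.proj (𝕜 := ℝ) j).hasFDerivAt.comp_hasDerivAt θ h1
    have h3 := Complex.ofRealCLM.hasFDerivAt.comp_hasDerivAt θ h2
    exact h3
  have hderiv_j : ∀ (j : Fin N) (θ : ℝ), deriv (gj j) θ = ((deriv g θ j : ℝ) : ℂ) :=
    fun j θ => (hd j θ).deriv
  have hgjc : ∀ j, ContDiff ℝ 1 (gj j) := fun j =>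
    Complex.ofRealCLM.contDiff.comp ((EuclideanSpace.proj (𝕜 := ℝ) j).contDiff.comp hg)
  have hperj : ∀ j, Function.Periodic (gj j) (2*π) := fun j θ => by
    simp only [hgj_def, hper θ]
  have h0j : ∀ j, (∫ θ in (0:ℝ)..(2*π), gj j θ) = 0 := by
    intro j
    have e1 : (∫ θ in (0:ℝ)..(2*π), gj j θ) =
        (Complex.ofRealCLM.comp (EuclideanSpace.proj (𝕜 := ℝ) j))
          (∫ θ in (0:ℝ)..(2*π), g θ) := by
      rw [← ContinuousLinearMap.intervalIntegral_comp_comm _ (hgc.intervalIntegrable _ _)]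
      rfl
    rw [e1, h0]
    simp
  have hnorm : ∀ (h : ℝ → EuclideanSpace ℝ (Fin N)) (θ : ℝ),
      ‖h θ‖^2 = ∑ j : Fin N, ‖((h θ j : ℝ) : ℂ)‖^2 := by
    intro h θ
    rw [EuclideanSpace.norm_eq, Real.sq_sqrt (by positivity)]
    simp
  have hcont' : ∀ j : Fin N, Continuous (deriv (gj j)) := by
    intro j
    have hfun : deriv (gj j) = fun θ => ((deriv g θ j : ℝ) : ℂ) := funext (hderiv_j j)
    rw [hfun]
    exact Complex.continuous_ofReal.comp ((EuclideanSpace.proj (𝕜 := ℝ) j).continuous.comp hg'c)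
  calc (∫ θ in (0:ℝ)..(2*π), ‖g θ‖^2)
      = ∫ θ in (0:ℝ)..(2*π), ∑ j : Fin N, ‖gj j θ‖^2 := by
        exact intervalIntegral.integral_congr fun θ _ => hnorm g θ
    _ = ∑ j : Fin N, ∫ θ in (0:ℝ)..(2*π), ‖gj j θ‖^2 := by
        refine intervalIntegral.integral_finset_sum fun j _ => ?_
        exact (((hgjc j).continuous.norm.pow 2)).intervalIntegrable _ _
    _ ≤ ∑ j : Fin N, ∫ θ in (0:ℝ)..(2*π), ‖deriv (gj j) θ‖^2 :=
        Finset.sum_le_sum fun j _ => wirtinger_C (hgjc j) (hperj j) (h0j j)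
    _ = ∫ θ in (0:ℝ)..(2*π), ∑ j : Fin N, ‖deriv (gj j) θ‖^2 := by
        refine (intervalIntegral.integral_finset_sum fun j _ => ?_).symm
        exact ((hcont' j).norm.pow 2).intervalIntegrable _ _
    _ = ∫ θ in (0:ℝ)..(2*π), ‖deriv g θ‖^2 := by
        refine intervalIntegral.integral_congr fun θ _ => ?_
        rw [hnorm (deriv g) θ]
        exact Finset.sum_congr rfl fun j _ => by rw [hderiv_j j θ]

end WirtingerSection


lemma pointwise_est {E : Type*} [NormedAddCommGroup E] [InnerProductSpace ℝ E]
    (a : ℝ) (Y X V1 V2 : E)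
    (hAe : ‖Y + X‖ ≤ a * (‖V1‖^2 + ‖V2‖^2)) :
    3/2 * ‖X‖^2 - 2*a^2*(‖V1‖^2 + ‖V2‖^2)^2 ≤ -2 * ⟪Y, X⟫ := by
  have h1 : ⟪Y, X⟫ = ⟪Y + X, X⟫ - ‖X‖^2 := by
    rw [inner_add_left, real_inner_self_eq_norm_sq]; ring
  have h2 : ⟪Y + X, X⟫ ≤ ‖Y + X‖ * ‖X‖ := real_inner_le_norm _ _
  have h3 : ‖Y + X‖ * ‖X‖ ≤ (a * (‖V1‖^2 + ‖V2‖^2)) * ‖X‖ :=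
    mul_le_mul_of_nonneg_right hAe (norm_nonneg _)
  nlinarith [sq_nonneg (‖X‖ - 2*(a*(‖V1‖^2 + ‖V2‖^2))), norm_nonneg X, h1, h2, h3]

/-- Differential inequality for the θ-energy of a `C³` harmonic map from a flat cylinder
into a compact submanifold `M ⊂ ℝᴺ` whose second fundamental form satisfies
`sup_M |A| = a` (so that `|Δu| ≤ a|∇u|²`): the function `f(t) = ∫_{S¹} |u_θ|²` satisfies
`f'' ≥ (3/2) f - 2 a² ∫_{S¹} |∇u|⁴`. -/
theorem stmt_11 (N : ℕ) (r₁ r₂ a : ℝ) (h12 : r₁ < r₂) (ha : 0 ≤ a)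
    (u : ℝ → ℝ → EuclideanSpace ℝ (Fin N))
    (M : Set (EuclideanSpace ℝ (Fin N)))
    (Tan : EuclideanSpace ℝ (Fin N) → Submodule ℝ (EuclideanSpace ℝ (Fin N)))
    (hu : ContDiff ℝ 3 (Function.uncurry u))
    (hper : ∀ t, Function.Periodic (u t) (2*π))
    (hmem : ∀ t θ, u t θ ∈ M)
    (hnormal : ∀ t θ, ∀ v ∈ Tan (u t θ),
      ⟪deriv (deriv (fun s => u s θ)) t + deriv (deriv (fun φ => u t φ)) θ, v⟫ = 0)
    (htan1 : ∀ t θ, deriv (fun s => u s θ) t ∈ Tan (u t θ))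
    (htan2 : ∀ t θ, deriv (fun φ => u t φ) θ ∈ Tan (u t θ))
    (hA : ∀ t θ, ‖deriv (deriv (fun s => u s θ)) t + deriv (deriv (fun φ => u t φ)) θ‖ ≤
      a * (‖deriv (fun s => u s θ) t‖^2 + ‖deriv (fun φ => u t φ) θ‖^2)) :
    ∀ t ∈ Icc r₁ r₂,
      3/2 * (∫ θ in (0:ℝ)..(2*π), ‖deriv (fun φ => u t φ) θ‖^2) -
          2 * a^2 * ∫ θ in (0:ℝ)..(2*π),
            (‖deriv (fun s => u s θ) t‖^2 + ‖deriv (fun φ => u t φ) θ‖^2)^2 ≤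
        deriv (deriv (fun s => ∫ θ in (0:ℝ)..(2*π), ‖deriv (fun φ => u s φ) θ‖^2)) t := by
  intro t _
  have hF : ContDiff ℝ 3 (Function.uncurry u) := hu
  set F : ℝ × ℝ → EuclideanSpace ℝ (Fin N) := Function.uncurry u with hFdef
  have hdF : Differentiable ℝ F := hF.differentiable (by norm_num)
  set v₁ : ℝ × ℝ → EuclideanSpace ℝ (Fin N) := fun p => fderiv ℝ F p ((1:ℝ), (0:ℝ)) with hv1def
  set v₂ : ℝ × ℝ → EuclideanSpace ℝ (Fin N) := fun p => fderiv ℝ F p ((0:ℝ), (1:ℝ)) with hv2def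
  have hv₁ : ContDiff ℝ 2 v₁ := contDiff_partial hF (by norm_num) _
  have hv₂ : ContDiff ℝ 2 v₂ := contDiff_partial hF (by norm_num) _
  set w : ℝ × ℝ → EuclideanSpace ℝ (Fin N) := fun p => fderiv ℝ v₂ p ((1:ℝ), (0:ℝ)) with hwdef
  set v₁₁ : ℝ × ℝ → EuclideanSpace ℝ (Fin N) := fun p => fderiv ℝ v₁ p ((1:ℝ), (0:ℝ)) with hv11def
  set v₂₂ : ℝ × ℝ → EuclideanSpace ℝ (Fin N) := fun p => fderiv ℝ v₂ p ((0:ℝ), (1:ℝ)) with hv22def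
  set z : ℝ × ℝ → EuclideanSpace ℝ (Fin N) := fun p => fderiv ℝ w p ((1:ℝ), (0:ℝ)) with hzdef
  have hw : ContDiff ℝ 1 w := contDiff_partial hv₂ (by norm_num) _
  have hv₁₁C : ContDiff ℝ 1 v₁₁ := contDiff_partial hv₁ (by norm_num) _
  have hv₂₂C : ContDiff ℝ 1 v₂₂ := contDiff_partial hv₂ (by norm_num) _
  have hv₂c : Continuous v₂ := hv₂.continuous
  have hwc : Continuous w := hw.continuous
  have hv₁₁c : Continuous v₁₁ := hv₁₁C.continuous
  have hv₂₂c : Continuous v₂₂ := hv₂₂C.continuous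
  have hzC : Continuous z := (contDiff_partial (m := 0) hw (by norm_num) _).continuous
  -- symmetry of mixed partials
  have hsymm1 : w = fun p => fderiv ℝ v₁ p ((0:ℝ), (1:ℝ)) := by
    funext p
    rw [hwdef, hv2def, hv1def]
    exact symm_partial (hF.of_le (by norm_num)) p _ _
  have hz2 : z = fun p => fderiv ℝ v₁₁ p ((0:ℝ), (1:ℝ)) := by
    funext p
    rw [hzdef, hsymm1, hv11def]
    exact symm_partial hv₁ p _ _
  -- translations between deriv and partials
  have d1 : ∀ s θ, HasDerivAt (fun s' => u s' θ) (v₁ (s, θ)) s := fun s θ =>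
    partial1_hasDerivAt hdF s θ
  have d2 : ∀ s θ, HasDerivAt (fun φ => u s φ) (v₂ (s, θ)) θ := fun s θ =>
    partial2_hasDerivAt hdF s θ
  have d1' : ∀ s θ, deriv (fun s' => u s' θ) s = v₁ (s, θ) := fun s θ => (d1 s θ).deriv
  have d2' : ∀ s θ, deriv (fun φ => u s φ) θ = v₂ (s, θ) := fun s θ => (d2 s θ).deriv
  have d11 : ∀ s θ, deriv (deriv (fun s' => u s' θ)) s = v₁₁ (s, θ) := by
    intro s θ
    have h1 : deriv (fun s' => u s' θ) = fun s' => v₁ (s', θ) := funext fun s' => d1' s' θ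
    rw [h1]
    exact (partial1_hasDerivAt (hv₁.differentiable two_ne_zero) s θ).deriv
  have d22 : ∀ s θ, deriv (deriv (fun φ => u s φ)) θ = v₂₂ (s, θ) := by
    intro s θ
    have h1 : deriv (fun φ => u s φ) = fun φ => v₂ (s, φ) := funext fun φ => d2' s φ
    rw [h1]
    exact (partial2_hasDerivAt (hv₂.differentiable two_ne_zero) s θ).deriv
  -- the energy density and its t-derivatives
  set g : ℝ × ℝ → ℝ := fun p => ‖v₂ p‖^2 with hgdef
  have hgC : ContDiff ℝ 2 g := hv₂.norm_sq (𝕜 := ℝ)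
  set g1 : ℝ × ℝ → ℝ := fun p => fderiv ℝ g p ((1:ℝ), (0:ℝ)) with hg1def
  have hg1C : ContDiff ℝ 1 g1 := contDiff_partial hgC (by norm_num) _
  set g2 : ℝ × ℝ → ℝ := fun p => fderiv ℝ g1 p ((1:ℝ), (0:ℝ)) with hg2def
  have hg2c : Continuous g2 := (contDiff_partial (m := 0) hg1C (by norm_num) _).continuous
  have hg1_eq : ∀ p : ℝ × ℝ, g1 p = 2 * ⟪w p, v₂ p⟫ := by
    intro p
    have h1 : HasDerivAt (fun s => v₂ (s, p.2)) (w p) p.1 := by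
      have h := partial1_hasDerivAt (hv₂.differentiable two_ne_zero) p.1 p.2
      simpa using h
    have h2 : HasDerivAt (fun s => g (s, p.2)) (2 * ⟪v₂ p, w p⟫) p.1 := h1.norm_sq
    have h3 : HasDerivAt (fun s => g (s, p.2)) (g1 p) p.1 := by
      have h := partial1_hasDerivAt (hgC.differentiable two_ne_zero) p.1 p.2
      simpa using h
    rw [h3.unique h2, real_inner_comm]
  have hg2_eq : ∀ p : ℝ × ℝ, g2 p = 2 * ⟪z p, v₂ p⟫ + 2 * ‖w p‖^2 := by
    intro p
    have hw1 : HasDerivAt (fun s => w (s, p.2)) (z p) p.1 := by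
      have h := partial1_hasDerivAt (hw.differentiable one_ne_zero) p.1 p.2
      simpa using h
    have hv2' : HasDerivAt (fun s => v₂ (s, p.2)) (w p) p.1 := by
      have h := partial1_hasDerivAt (hv₂.differentiable two_ne_zero) p.1 p.2
      simpa using h
    have h2 : HasDerivAt (fun s => ⟪w (s, p.2), v₂ (s, p.2)⟫)
        (⟪w p, w p⟫ + ⟪z p, v₂ p⟫) p.1 := HasDerivAt.inner ℝ hw1 hv2'
    have h2' : HasDerivAt (fun s => g1 (s, p.2)) (2 * (⟪w p, w p⟫ + ⟪z p, v₂ p⟫)) p.1 := by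
      have hfun : (fun s => g1 (s, p.2)) = fun s => 2 * ⟪w (s, p.2), v₂ (s, p.2)⟫ :=
        funext fun s => hg1_eq (s, p.2)
      rw [hfun]
      exact h2.const_mul 2
    have h3 : HasDerivAt (fun s => g1 (s, p.2)) (g2 p) p.1 := by
      have h := partial1_hasDerivAt (hg1C.differentiable one_ne_zero) p.1 p.2
      simpa using h
    rw [h3.unique h2', real_inner_self_eq_norm_sq]
    ring
  -- periodicity in θ
  have hTper : ∀ p : ℝ × ℝ, F (p + ((0:ℝ), 2*π)) = F p := by
    intro p
    show Function.uncurry u (p.1 + 0, p.2 + 2*π) = Function.uncurry u (p.1, p.2)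
    rw [add_zero]
    exact hper p.1 p.2
  have hv₁per : ∀ p : ℝ × ℝ, v₁ (p + ((0:ℝ), 2*π)) = v₁ p := by
    intro p
    simp only [hv1def]
    rw [fderiv_periodic hdF _ hTper p]
  have hv₂per : ∀ p : ℝ × ℝ, v₂ (p + ((0:ℝ), 2*π)) = v₂ p := by
    intro p
    simp only [hv2def]
    rw [fderiv_periodic hdF _ hTper p]
  have hv₁₁per : ∀ p : ℝ × ℝ, v₁₁ (p + ((0:ℝ), 2*π)) = v₁₁ p := by
    intro p
    simp only [hv11def]
    rw [fderiv_periodic (hv₁.differentiable two_ne_zero) _ hv₁per p]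
  have hbdry : ∀ (G : ℝ × ℝ → EuclideanSpace ℝ (Fin N)),
      (∀ p, G (p + ((0:ℝ), 2*π)) = G p) → G (t, 2*π) = G (t, 0) := by
    intro G hG
    have h := hG (t, 0)
    simpa using h
  -- rewriting the goal
  have hI1 : (∫ θ in (0:ℝ)..(2*π), ‖deriv (fun φ => u t φ) θ‖^2)
      = ∫ θ in (0:ℝ)..(2*π), ‖v₂ (t, θ)‖^2 :=
    intervalIntegral.integral_congr fun θ _ => by rw [d2' t θ]
  have hI2 : (∫ θ in (0:ℝ)..(2*π),
        (‖deriv (fun s => u s θ) t‖^2 + ‖deriv (fun φ => u t φ) θ‖^2)^2)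
      = ∫ θ in (0:ℝ)..(2*π), (‖v₁ (t, θ)‖^2 + ‖v₂ (t, θ)‖^2)^2 :=
    intervalIntegral.integral_congr fun θ _ => by rw [d1' t θ, d2' t θ]
  have hf_eq : (fun s => ∫ θ in (0:ℝ)..(2*π), ‖deriv (fun φ => u s φ) θ‖^2)
      = fun s => ∫ θ in (0:ℝ)..(2*π), g (s, θ) := by
    funext s
    exact intervalIntegral.integral_congr fun θ _ => by rw [d2' s θ]
  have hparam1 : ∀ s : ℝ, HasDerivAt (fun s' => ∫ θ in (0:ℝ)..(2*π), g (s', θ))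
      (∫ θ in (0:ℝ)..(2*π), g1 (s, θ)) s := by
    intro s
    have h := hasDerivAt_param (h := fun x y => g (x, y)) (hgC.of_le one_le_two) (2*π) s
    have heq : (∫ θ in (0:ℝ)..(2*π), deriv (fun s' => g (s', θ)) s)
        = ∫ θ in (0:ℝ)..(2*π), g1 (s, θ) :=
      intervalIntegral.integral_congr fun θ _ =>
        (partial1_hasDerivAt (hgC.differentiable two_ne_zero) s θ).deriv
    rw [heq] at h
    exact h
  have hD1 : deriv (fun s => ∫ θ in (0:ℝ)..(2*π), g (s, θ))
      = fun s => ∫ θ in (0:ℝ)..(2*π), g1 (s, θ) := funext fun s => (hparam1 s).deriv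
  have hparam2 : HasDerivAt (fun s => ∫ θ in (0:ℝ)..(2*π), g1 (s, θ))
      (∫ θ in (0:ℝ)..(2*π), g2 (t, θ)) t := by
    have h := hasDerivAt_param (h := fun x y => g1 (x, y)) hg1C (2*π) t
    have heq : (∫ θ in (0:ℝ)..(2*π), deriv (fun s' => g1 (s', θ)) t)
        = ∫ θ in (0:ℝ)..(2*π), g2 (t, θ) :=
      intervalIntegral.integral_congr fun θ _ =>
        (partial1_hasDerivAt (hg1C.differentiable one_ne_zero) t θ).deriv
    rw [heq] at h
    exact h
  rw [hI1, hI2, hf_eq, hD1, hparam2.deriv]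
  -- integration by parts
  have c_zv : Continuous fun θ => ⟪z (t, θ), v₂ (t, θ)⟫ :=
    (hzC.comp (Continuous.prodMk_right t)).inner (hv₂c.comp (Continuous.prodMk_right t))
  have c_w2 : Continuous fun θ => ‖w (t, θ)‖^2 :=
    ((hwc.comp (Continuous.prodMk_right t)).norm.pow 2)
  have c_1122 : Continuous fun θ => ⟪v₁₁ (t, θ), v₂₂ (t, θ)⟫ :=
    (hv₁₁c.comp (Continuous.prodMk_right t)).inner (hv₂₂c.comp (Continuous.prodMk_right t))
  have hibp : (∫ θ in (0:ℝ)..(2*π), ⟪z (t, θ), v₂ (t, θ)⟫)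
      = - ∫ θ in (0:ℝ)..(2*π), ⟪v₁₁ (t, θ), v₂₂ (t, θ)⟫ := by
    have hd : ∀ θ : ℝ, HasDerivAt (fun θ' => ⟪v₁₁ (t, θ'), v₂ (t, θ')⟫)
        (⟪v₁₁ (t, θ), v₂₂ (t, θ)⟫ + ⟪z (t, θ), v₂ (t, θ)⟫) θ := by
      intro θ
      have h1 : HasDerivAt (fun θ' => v₁₁ (t, θ')) (z (t, θ)) θ := by
        have h := partial2_hasDerivAt (hv₁₁C.differentiable one_ne_zero) t θ
        rw [hz2]
        exact h
      have h2 : HasDerivAt (fun θ' => v₂ (t, θ')) (v₂₂ (t, θ)) θ :=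
        partial2_hasDerivAt (hv₂.differentiable two_ne_zero) t θ
      exact HasDerivAt.inner ℝ h1 h2
    have hint := intervalIntegral.integral_eq_sub_of_hasDerivAt (a := (0:ℝ)) (b := 2*π)
      (f := fun θ' => ⟪v₁₁ (t, θ'), v₂ (t, θ')⟫) (fun θ _ => hd θ)
      ((c_1122.add c_zv).intervalIntegrable _ _)
    have hzero : ⟪v₁₁ (t, 2*π), v₂ (t, 2*π)⟫ - ⟪v₁₁ (t, 0), v₂ (t, 0)⟫ = 0 := by
      rw [hbdry v₁₁ hv₁₁per, hbdry v₂ hv₂per]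
      ring
    rw [hzero, intervalIntegral.integral_add (c_1122.intervalIntegrable _ _)
      (c_zv.intervalIntegrable _ _)] at hint
    linarith
  -- Wirtinger
  have h0int : (∫ θ in (0:ℝ)..(2*π), v₂ (t, θ)) = 0 := by
    rw [intervalIntegral.integral_eq_sub_of_hasDerivAt (fun θ _ => d2 t θ)
      ((hv₂c.comp (Continuous.prodMk_right t)).intervalIntegrable _ _)]
    have h := hper t 0
    simp only [zero_add] at h
    rw [h, sub_self]
  have hwir : (∫ θ in (0:ℝ)..(2*π), ‖v₂ (t, θ)‖^2)
      ≤ ∫ θ in (0:ℝ)..(2*π), ‖v₂₂ (t, θ)‖^2 := by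
    have hgθ : ContDiff ℝ 1 (fun θ => v₂ (t, θ)) :=
      (hv₂.of_le one_le_two).comp (contDiff_const.prodMk contDiff_id)
    have hperθ : Function.Periodic (fun θ => v₂ (t, θ)) (2*π) := by
      intro θ
      have h := hv₂per (t, θ)
      simpa using h
    have hres := wirtinger_E hgθ hperθ h0int
    have hdeq : deriv (fun θ => v₂ (t, θ)) = fun θ => v₂₂ (t, θ) :=
      funext fun θ => (partial2_hasDerivAt (hv₂.differentiable two_ne_zero) t θ).deriv
    rwa [hdeq] at hres
  -- pointwise inequality
  have hpt : ∀ θ ∈ Icc (0:ℝ) (2*π),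
      3/2 * ‖v₂₂ (t, θ)‖^2 - 2*a^2*(‖v₁ (t, θ)‖^2 + ‖v₂ (t, θ)‖^2)^2
        ≤ -2 * ⟪v₁₁ (t, θ), v₂₂ (t, θ)⟫ := by
    intro θ _
    have hAe : ‖v₁₁ (t, θ) + v₂₂ (t, θ)‖ ≤ a * (‖v₁ (t, θ)‖^2 + ‖v₂ (t, θ)‖^2) := by
      have h := hA t θ
      rwa [d11 t θ, d22 t θ, d1' t θ, d2' t θ] at h
    exact pointwise_est a _ _ _ _ hAe
  -- assembling
  have c_v22sq : Continuous fun θ => ‖v₂₂ (t, θ)‖^2 :=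
    ((hv₂₂c.comp (Continuous.prodMk_right t)).norm.pow 2)
  have c_esq : Continuous fun θ => (‖v₁ (t, θ)‖^2 + ‖v₂ (t, θ)‖^2)^2 :=
    ((((hv₁.continuous.comp (Continuous.prodMk_right t)).norm.pow 2).add
      ((hv₂c.comp (Continuous.prodMk_right t)).norm.pow 2)).pow 2)
  have hsplit : (∫ θ in (0:ℝ)..(2*π), g2 (t, θ))
      = 2 * (∫ θ in (0:ℝ)..(2*π), ⟪z (t, θ), v₂ (t, θ)⟫)
        + 2 * ∫ θ in (0:ℝ)..(2*π), ‖w (t, θ)‖^2 := by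
    rw [show (∫ θ in (0:ℝ)..(2*π), g2 (t, θ))
        = ∫ θ in (0:ℝ)..(2*π), (2 * ⟪z (t, θ), v₂ (t, θ)⟫ + 2 * ‖w (t, θ)‖^2) from
      intervalIntegral.integral_congr fun θ _ => hg2_eq (t, θ)]
    rw [intervalIntegral.integral_add ((c_zv.intervalIntegrable _ _).const_mul 2)
      ((c_w2.intervalIntegrable _ _).const_mul 2),
      intervalIntegral.integral_const_mul, intervalIntegral.integral_const_mul]
  have hmono : (∫ θ in (0:ℝ)..(2*π), (3/2 * ‖v₂₂ (t, θ)‖^2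
        - 2*a^2*(‖v₁ (t, θ)‖^2 + ‖v₂ (t, θ)‖^2)^2))
      ≤ ∫ θ in (0:ℝ)..(2*π), (-2 * ⟪v₁₁ (t, θ), v₂₂ (t, θ)⟫) :=
    intervalIntegral.integral_mono_on two_pi_pos'.le
      (((continuous_const.mul c_v22sq).sub (continuous_const.mul c_esq)).intervalIntegrable _ _)
      ((continuous_const.mul c_1122).intervalIntegrable _ _) hpt
  have hsplit2 : (∫ θ in (0:ℝ)..(2*π), (3/2 * ‖v₂₂ (t, θ)‖^2
        - 2*a^2*(‖v₁ (t, θ)‖^2 + ‖v₂ (t, θ)‖^2)^2))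
      = 3/2 * (∫ θ in (0:ℝ)..(2*π), ‖v₂₂ (t, θ)‖^2)
        - 2*a^2 * ∫ θ in (0:ℝ)..(2*π), (‖v₁ (t, θ)‖^2 + ‖v₂ (t, θ)‖^2)^2 := by
    rw [intervalIntegral.integral_sub ((c_v22sq.intervalIntegrable _ _).const_mul (3/2))
      ((c_esq.intervalIntegrable _ _).const_mul (2*a^2)),
      intervalIntegral.integral_const_mul, intervalIntegral.integral_const_mul]
  have hsplit3 : (∫ θ in (0:ℝ)..(2*π), (-2 * ⟪v₁₁ (t, θ), v₂₂ (t, θ)⟫))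
      = -2 * ∫ θ in (0:ℝ)..(2*π), ⟪v₁₁ (t, θ), v₂₂ (t, θ)⟫ :=
    intervalIntegral.integral_const_mul _ _
  have hw2pos : 0 ≤ ∫ θ in (0:ℝ)..(2*π), ‖w (t, θ)‖^2 :=
    intervalIntegral.integral_nonneg two_pi_pos'.le (fun θ _ => by positivity)
  rw [hsplit, hibp]
  rw [hsplit2, hsplit3] at hmono
  linarith only [hwir, hmono, hw2pos]
end

section
/- Let ζ be a holomorphic function on the unit disk B₁ ⊂ ℂ with ∫_{B₁}|ζ|² < ∞, and let h ∈ W₀^{1,2}(B₁) (real-valued with zero boundary trace). Then ∫_{B₁} h²·|ζ|² ≤ 8·(∫_{B₁}|∇h|²)·(∫_{B₁}|ζ|²). -/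
open Real MeasureTheory

private lemma wente_hardy1d (g g' : ℝ → ℝ) (ρ : ℝ) (hρ0 : 0 < ρ) (hρ1 : ρ < 1)
    (hg : ∀ x : ℝ, HasDerivAt g (g' x) x) (hg'c : Continuous g') (hgρ : g ρ = 0) :
    ∫ R in (0:ℝ)..ρ, g R ^ 2 * (R * ((1 - R) ^ 2)⁻¹)
      ≤ 4 * ∫ R in (0:ℝ)..ρ, R * g' R ^ 2 := by
  have hgc : Continuous g := continuous_iff_continuousAt.2 fun x => (hg x).continuousAt
  have huIcc : Set.uIcc (0:ℝ) ρ = Set.Icc 0 ρ := Set.uIcc_of_le hρ0.le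
  set φ : ℝ → ℝ := fun R => R * (1 - R)⁻¹ + Real.log (1 - R) with hφdef
  have hφd : ∀ R ∈ Set.Icc (0:ℝ) ρ, HasDerivAt φ (R * ((1 - R) ^ 2)⁻¹) R := by
    intro R hR
    have h1R : 0 < 1 - R := by linarith [hR.2]
    have h1 : HasDerivAt (fun R : ℝ => 1 - R) (-1) R := by
      simpa using (hasDerivAt_id' R).const_sub (1:ℝ)
    have h2 : HasDerivAt (fun R : ℝ => (1 - R)⁻¹) (-(-1) / (1 - R) ^ 2) R := h1.inv h1R.ne'
    have h3 : HasDerivAt (fun R : ℝ => R * (1 - R)⁻¹)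
        (1 * (1 - R)⁻¹ + R * (-(-1) / (1 - R) ^ 2)) R := (hasDerivAt_id R).mul h2
    have h4 : HasDerivAt (fun R : ℝ => Real.log (1 - R)) (-1 / (1 - R)) R := h1.log h1R.ne'
    have h5 : HasDerivAt φ (1 * (1 - R)⁻¹ + R * (-(-1) / (1 - R) ^ 2) + -1 / (1 - R)) R :=
      h3.add h4
    convert h5 using 1
    have hne : (1 - R) ≠ 0 := h1R.ne'
    field_simp
    ring
  have hφ0 : φ 0 = 0 := by simp [hφdef]
  have hφnn : ∀ R ∈ Set.Icc (0:ℝ) ρ, 0 ≤ φ R ∧ φ R ≤ R * (1 - R)⁻¹ := by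
    intro R hR
    have h1R : 0 < 1 - R := by linarith [hR.2]
    have hlog1 : Real.log (1 - R) ≤ 0 :=
      Real.log_nonpos (by linarith) (by linarith [hR.1])
    have hlog2 : Real.log ((1 - R)⁻¹) ≤ (1 - R)⁻¹ - 1 :=
      Real.log_le_sub_one_of_pos (inv_pos.2 h1R)
    rw [Real.log_inv] at hlog2
    have hkey : R * (1 - R)⁻¹ = (1 - R)⁻¹ - 1 := by field_simp; ring
    constructor
    · simp only [hφdef]; linarith
    · simp only [hφdef]; linarith
  have hw_cont : ContinuousOn (fun R : ℝ => R * ((1 - R) ^ 2)⁻¹) (Set.uIcc 0 ρ) := by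
    rw [huIcc]
    apply continuousOn_id.mul
    apply ContinuousOn.inv₀ ((continuous_const.sub continuous_id).pow 2).continuousOn
    intro R hR
    have : 0 < 1 - R := by linarith [hR.2]
    exact pow_ne_zero 2 this.ne'
  have hφ_cont : ContinuousOn φ (Set.uIcc 0 ρ) := by
    rw [huIcc]
    exact fun R hR => ((hφd R hR).continuousAt).continuousWithinAt
  have hu : ∀ x ∈ Set.uIcc (0:ℝ) ρ, HasDerivAt (fun R => g R ^ 2) (2 * g x * g' x) x := by
    intro x _
    simpa using (hg x).fun_pow 2
  have hIBP := intervalIntegral.integral_mul_deriv_eq_deriv_mul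
      (u := fun R => g R ^ 2) (u' := fun R => 2 * g R * g' R) (v := φ)
      (v' := fun R => R * ((1 - R) ^ 2)⁻¹)
      hu (fun x hx => hφd x (huIcc ▸ hx))
      (((continuous_const.mul hgc).mul hg'c).intervalIntegrable 0 ρ)
      (hw_cont.intervalIntegrable)
  simp only [hgρ, hφ0, mul_zero, zero_mul, sub_zero, zero_sub, ne_eq, OfNat.ofNat_ne_zero,
    not_false_eq_true, zero_pow] at hIBP
  have hA : (∫ R in (0:ℝ)..ρ, g R ^ 2 * (R * ((1 - R) ^ 2)⁻¹))
      = - ∫ R in (0:ℝ)..ρ, 2 * g R * g' R * φ R := hIBP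
  have hmono : (- ∫ R in (0:ℝ)..ρ, 2 * g R * g' R * φ R)
      ≤ ∫ R in (0:ℝ)..ρ, (1/2 * (g R ^ 2 * (R * ((1 - R) ^ 2)⁻¹)) + 2 * (R * g' R ^ 2)) := by
    rw [← intervalIntegral.integral_neg]
    apply intervalIntegral.integral_mono_on hρ0.le
    · exact ((((continuous_const.mul hgc).mul hg'c).continuousOn.mul hφ_cont).intervalIntegrable).neg
    · apply ContinuousOn.intervalIntegrable
      apply ContinuousOn.add
      · exact continuousOn_const.mul ((hgc.pow 2).continuousOn.mul hw_cont)
      · exact continuousOn_const.mul (continuousOn_id.mul (hg'c.pow 2).continuousOn)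
    · intro R hR
      obtain ⟨hφ1, hφ2⟩ := hφnn R hR
      have h1R : 0 < 1 - R := by linarith [hR.2]
      have hc0 : (0:ℝ) ≤ (1 - R)⁻¹ := (inv_pos.2 h1R).le
      have habs : -(2 * g R * g' R * φ R) ≤ (2 * |g R| * |g' R|) * φ R := by
        have h1 := mul_le_mul_of_nonneg_right (neg_le_abs (2 * g R * g' R)) hφ1
        calc -(2 * g R * g' R * φ R) = -(2 * g R * g' R) * φ R := by ring
          _ ≤ |2 * g R * g' R| * φ R := h1
          _ = (2 * |g R| * |g' R|) * φ R := by rw [abs_mul, abs_mul, abs_two]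
      have hstep : (2 * |g R| * |g' R|) * φ R ≤ (2 * |g R| * |g' R|) * (R * (1 - R)⁻¹) :=
        mul_le_mul_of_nonneg_left hφ2 (by positivity)
      have hfin : (2 * |g R| * |g' R|) * (R * (1 - R)⁻¹)
          ≤ 1/2 * (g R ^ 2 * (R * ((1 - R) ^ 2)⁻¹)) + 2 * (R * g' R ^ 2) := by
        have hinv : ((1 - R) ^ 2)⁻¹ = ((1 - R)⁻¹) ^ 2 := by rw [inv_pow]
        have key : ∀ u v : ℝ, 0 ≤ u → 0 ≤ v →
            2 * u * v * (R * (1 - R)⁻¹)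
              ≤ 1/2 * (u ^ 2 * (R * ((1 - R)⁻¹) ^ 2)) + 2 * (R * v ^ 2) := by
          intro u v hu hv
          nlinarith [mul_nonneg hR.1 (sq_nonneg (u * (1 - R)⁻¹ - 2 * v))]
        have hk := key |g R| |g' R| (abs_nonneg _) (abs_nonneg _)
        rw [hinv]
        calc (2 * |g R| * |g' R|) * (R * (1 - R)⁻¹)
            ≤ 1/2 * (|g R| ^ 2 * (R * ((1 - R)⁻¹) ^ 2)) + 2 * (R * |g' R| ^ 2) := by linarith
          _ = 1/2 * (g R ^ 2 * (R * ((1 - R)⁻¹) ^ 2)) + 2 * (R * g' R ^ 2) := by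
              rw [sq_abs, sq_abs]
      exact habs.trans (hstep.trans hfin)
  have hsplit : (∫ R in (0:ℝ)..ρ, (1/2 * (g R ^ 2 * (R * ((1 - R) ^ 2)⁻¹)) + 2 * (R * g' R ^ 2)))
      = 1/2 * (∫ R in (0:ℝ)..ρ, g R ^ 2 * (R * ((1 - R) ^ 2)⁻¹))
        + 2 * ∫ R in (0:ℝ)..ρ, R * g' R ^ 2 := by
    rw [intervalIntegral.integral_add, intervalIntegral.integral_const_mul,
      intervalIntegral.integral_const_mul]
    · apply ContinuousOn.intervalIntegrable
      exact continuousOn_const.mul ((hgc.pow 2).continuousOn.mul hw_cont)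
    · exact (continuous_const.mul (continuous_id.mul (hg'c.pow 2))).intervalIntegrable _ _
  linarith [hA, hmono, hsplit]

private lemma wente_symm_cont : Continuous fun p : ℝ × ℝ => Complex.polarCoord.symm p := by
  have : Continuous fun p : ℝ × ℝ =>
      (p.1 : ℂ) * ((Real.cos p.2 : ℂ) + (Real.sin p.2 : ℂ) * Complex.I) := by
    fun_prop
  convert this using 2 with p
  simp [Complex.polarCoord_symm_apply]

private lemma wente_symm_norm (p : ℝ × ℝ) : ‖Complex.polarCoord.symm p‖ = |p.1| := by
  rw [Complex.norm_polarCoord_symm]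

private lemma wente_polar (F : ℂ → ℝ) (ρ₀ ρ : ℝ) (hρ₀ : 0 < ρ₀) (h₀ρ : ρ₀ < ρ) (hρ1 : ρ < 1)
    (hFc : ContinuousOn F (Metric.ball 0 1))
    (hF0 : ∀ z : ℂ, ρ₀ < ‖z‖ → F z = 0) :
    ((∫ z in Metric.ball (0:ℂ) 1, F z)
        = ∫ θ in Set.Ioo (-π) π, ∫ R in (0:ℝ)..ρ, R * F (Complex.polarCoord.symm (R, θ)))
      ∧ Integrable (fun θ => ∫ R in (0:ℝ)..ρ, R * F (Complex.polarCoord.symm (R, θ)))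
          (volume.restrict (Set.Ioo (-π) π)) := by
  have hρ0 : 0 < ρ := hρ₀.trans h₀ρ
  set G : ℝ × ℝ → ℝ := fun p => p.1 * F (Complex.polarCoord.symm p) with hG
  have hGK : IntegrableOn G (Set.Icc 0 ρ ×ˢ Set.Icc (-π) π) volume := by
    apply ContinuousOn.integrableOn_compact (isCompact_Icc.prod isCompact_Icc)
    apply (continuous_fst.continuousOn).mul
    apply hFc.comp wente_symm_cont.continuousOn
    intro p hp
    show Complex.polarCoord.symm p ∈ Metric.ball 0 1
    rw [mem_ball_zero_iff, wente_symm_norm]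
    have h1 := hp.1.1
    have h2 := hp.1.2
    rw [abs_of_nonneg h1]
    linarith
  have hS : IntegrableOn G (Set.Ioc 0 ρ ×ˢ Set.Ioo (-π) π) volume :=
    hGK.mono_set (Set.prod_mono Set.Ioc_subset_Icc_self Set.Ioo_subset_Icc_self)
  have hGzero : ∀ p : ℝ × ℝ, ρ < p.1 → G p = 0 := by
    intro p hp
    have hF : F (Complex.polarCoord.symm p) = 0 := by
      apply hF0
      rw [wente_symm_norm]
      have : (0:ℝ) ≤ p.1 := (hρ0.trans hp).le
      rw [abs_of_nonneg this]
      linarith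
    show p.1 * F (Complex.polarCoord.symm p) = 0
    rw [hF, mul_zero]
  have eq1 : (∫ z in Metric.ball (0:ℂ) 1, F z) = ∫ z, F z := by
    apply setIntegral_eq_integral_of_forall_compl_eq_zero
    intro z hz
    apply hF0
    rw [Metric.mem_ball, dist_zero_right, not_lt] at hz
    linarith
  have eq2 : (∫ z, F z) = ∫ p in polarCoord.target, p.1 • F (Complex.polarCoord.symm p) :=
    (Complex.integral_comp_polarCoord_symm F).symm
  have eq3 : (∫ p in polarCoord.target, p.1 • F (Complex.polarCoord.symm p))
      = ∫ p in Set.Ioc 0 ρ ×ˢ Set.Ioo (-π) π, G p := by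
    rw [polarCoord_target]
    have hunion : Set.Ioi (0:ℝ) ×ˢ Set.Ioo (-π) π
        = (Set.Ioc 0 ρ ×ˢ Set.Ioo (-π) π) ∪ (Set.Ioi ρ ×ˢ Set.Ioo (-π) π) := by
      rw [← Set.union_prod, Set.Ioc_union_Ioi_eq_Ioi hρ0.le]
    have hdisj : Disjoint (Set.Ioc 0 ρ ×ˢ Set.Ioo (-π) π) (Set.Ioi ρ ×ˢ Set.Ioo (-π) π) := by
      rw [Set.disjoint_left]
      rintro p ⟨hp1, -⟩ ⟨hq1, -⟩
      exact absurd hq1 (not_lt.2 hp1.2)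
    have hzero2 : Set.EqOn G (fun _ => (0:ℝ)) (Set.Ioi ρ ×ˢ Set.Ioo (-π) π) :=
      fun p hp => hGzero p hp.1
    have hint2 : IntegrableOn G (Set.Ioi ρ ×ˢ Set.Ioo (-π) π) volume := by
      rw [integrableOn_congr_fun hzero2 (measurableSet_Ioi.prod measurableSet_Ioo)]
      exact integrableOn_zero
    simp only [smul_eq_mul]
    rw [hunion, setIntegral_union hdisj (measurableSet_Ioi.prod measurableSet_Ioo) hS hint2,
      setIntegral_congr_fun (measurableSet_Ioi.prod measurableSet_Ioo) hzero2]
    simp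
  have hS' : Integrable (Function.uncurry fun R θ => G (R, θ))
      ((volume.restrict (Set.Ioc 0 ρ)).prod (volume.restrict (Set.Ioo (-π) π))) := by
    rw [Measure.prod_restrict, ← Measure.volume_eq_prod]
    exact hS
  have eq4 : (∫ p in Set.Ioc 0 ρ ×ˢ Set.Ioo (-π) π, G p)
      = ∫ R in Set.Ioc 0 ρ, ∫ θ in Set.Ioo (-π) π, G (R, θ) := by
    rw [Measure.volume_eq_prod]
    exact setIntegral_prod _ (by rwa [← Measure.volume_eq_prod])
  have eq5 : (∫ R in Set.Ioc 0 ρ, ∫ θ in Set.Ioo (-π) π, G (R, θ))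
      = ∫ θ in Set.Ioo (-π) π, ∫ R in Set.Ioc 0 ρ, G (R, θ) :=
    integral_integral_swap hS'
  have eq6 : ∀ θ : ℝ, (∫ R in Set.Ioc 0 ρ, G (R, θ))
      = ∫ R in (0:ℝ)..ρ, R * F (Complex.polarCoord.symm (R, θ)) := by
    intro θ
    rw [intervalIntegral.integral_of_le hρ0.le]
  constructor
  · rw [eq1, eq2, eq3, eq4, eq5]
    simp only [eq6]
  · have h7 := (hS'.swap).integral_prod_left
    exact h7.congr (Filter.Eventually.of_forall fun θ => eq6 θ)

private lemma wente_integrableOn (F : ℂ → ℝ) (ρ₀ : ℝ) (hρ₀1 : ρ₀ < 1)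
    (hFc : ContinuousOn F (Metric.ball 0 1)) (hF0 : ∀ z : ℂ, ρ₀ < ‖z‖ → F z = 0) :
    IntegrableOn F (Metric.ball (0:ℂ) 1) volume := by
  set r : ℝ := (max ρ₀ 0 + 1) / 2 with hr
  have hm1 : max ρ₀ 0 < 1 := max_lt hρ₀1 zero_lt_one
  have hr1 : r < 1 := by rw [hr]; linarith
  have hρ₀r : ρ₀ < r := by
    have : ρ₀ ≤ max ρ₀ 0 := le_max_left _ _
    rw [hr]; linarith
  have h1 : IntegrableOn F (Metric.ball (0:ℂ) 1 ∩ Metric.closedBall 0 r) volume := by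
    apply IntegrableOn.mono_set _ Set.inter_subset_right
    exact ContinuousOn.integrableOn_compact (isCompact_closedBall _ _)
      (hFc.mono (Metric.closedBall_subset_ball hr1))
  have h2 : IntegrableOn F (Metric.ball (0:ℂ) 1 \ Metric.closedBall 0 r) volume := by
    rw [integrableOn_congr_fun (g := fun _ => (0:ℝ)) ?_
      (measurableSet_ball.diff measurableSet_closedBall)]
    · exact integrableOn_zero
    · intro w hw
      apply hF0
      have h3 := hw.2
      rw [Metric.mem_closedBall, dist_zero_right, not_le] at h3
      linarith
  apply (h1.union h2).mono_set
  intro w hw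
  by_cases hwr : w ∈ Metric.closedBall (0:ℂ) r
  · exact Or.inl ⟨hw, hwr⟩
  · exact Or.inr ⟨hw, hwr⟩

private lemma wente_submean (ζ : ℂ → ℂ) (hζ : DifferentiableOn ℂ ζ (Metric.ball 0 1))
    (hζ2 : IntegrableOn (fun z => ‖ζ z‖ ^ 2) (Metric.ball 0 1) volume)
    (z : ℂ) (hz : z ∈ Metric.ball (0:ℂ) 1) :
    ‖ζ z‖ ^ 2 * (π * ((1 - ‖z‖) / 2) ^ 2) ≤ ∫ w in Metric.ball (0:ℂ) 1, ‖ζ w‖ ^ 2 := by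
  rw [mem_ball_zero_iff] at hz
  set s : ℝ := (1 - ‖z‖) / 2 with hs_def
  have hs : 0 < s := by rw [hs_def]; linarith
  have hsub : Metric.closedBall z s ⊆ Metric.ball (0:ℂ) 1 := by
    intro w hw
    rw [Metric.mem_closedBall, dist_eq_norm] at hw
    rw [mem_ball_zero_iff]
    have h1 : w = z + (w - z) := by ring
    calc ‖w‖ = ‖z + (w - z)‖ := by rw [← h1]
      _ ≤ ‖z‖ + ‖w - z‖ := norm_add_le _ _
      _ ≤ ‖z‖ + s := by linarith
      _ < 1 := by rw [hs_def]; linarith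
  have hsymm_eq : ∀ R θ : ℝ, z + Complex.polarCoord.symm (R, θ) = circleMap z R θ := by
    intro R θ
    simp [circleMap, Complex.polarCoord_symm_apply, Complex.exp_mul_I,
      ← Complex.ofReal_cos, ← Complex.ofReal_sin]
  have key : ∀ R : ℝ, R ∈ Set.Ioo (0:ℝ) s →
      2 * π * ‖ζ z‖ ^ 2 ≤ ∫ θ in Set.Ioo (-π) π, ‖ζ (z + Complex.polarCoord.symm (R, θ))‖ ^ 2 := by
    intro R hR
    have hR0 : 0 < R := hR.1
    have hsphere : ∀ θ : ℝ, circleMap z R θ ∈ Metric.ball (0:ℂ) 1 := fun θ =>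
      hsub (Metric.closedBall_subset_closedBall hR.2.le
        (Metric.sphere_subset_closedBall (circleMap_mem_sphere z hR0.le θ)))
    have hcmC : Continuous fun θ : ℝ => ζ (circleMap z R θ) :=
      hζ.continuousOn.comp_continuous (continuous_circleMap z R) hsphere
    have hdc : DiffContOnCl ℂ ζ (Metric.ball z R) := by
      constructor
      · exact hζ.mono fun w hw => hsub (Metric.closedBall_subset_closedBall hR.2.le
          (Metric.ball_subset_closedBall hw))
      · apply hζ.continuousOn.mono
        rw [closure_ball z hR0.ne']
        exact fun w hw => hsub (Metric.closedBall_subset_closedBall hR.2.le hw)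
    have hC := hdc.circleIntegral_sub_inv_smul (Metric.mem_ball_self hR0)
    rw [circleIntegral] at hC
    simp only [deriv_circleMap, circleMap_sub_center, smul_eq_mul] at hC
    have hne : ∀ θ : ℝ, circleMap 0 R θ ≠ 0 := by
      intro θ
      simp only [circleMap, zero_add]
      exact mul_ne_zero (Complex.ofReal_ne_zero.2 hR0.ne') (Complex.exp_ne_zero _)
    have hC2 : ∀ θ : ℝ, circleMap 0 R θ * Complex.I * ((circleMap 0 R θ)⁻¹ * ζ (circleMap z R θ))
        = Complex.I * ζ (circleMap z R θ) := by
      intro θ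
      have hne' := hne θ
      field_simp
    simp only [hC2] at hC
    rw [intervalIntegral.integral_const_mul] at hC
    have hmean : (∫ θ in (0:ℝ)..(2*π), ζ (circleMap z R θ)) = ((2*π : ℝ) : ℂ) * ζ z := by
      apply mul_left_cancel₀ Complex.I_ne_zero
      rw [hC]
      push_cast
      ring
    have hnorm : 2 * π * ‖ζ z‖ ≤ ∫ θ in (0:ℝ)..(2*π), ‖ζ (circleMap z R θ)‖ := by
      have h1 : ‖∫ θ in (0:ℝ)..(2*π), ζ (circleMap z R θ)‖ = 2*π*‖ζ z‖ := by
        rw [hmean, norm_mul, Complex.norm_real, Real.norm_eq_abs,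
          abs_of_pos Real.two_pi_pos]
      calc 2*π*‖ζ z‖ = ‖∫ θ in (0:ℝ)..(2*π), ζ (circleMap z R θ)‖ := h1.symm
        _ ≤ ∫ θ in (0:ℝ)..(2*π), ‖ζ (circleMap z R θ)‖ :=
          intervalIntegral.norm_integral_le_integral_norm Real.two_pi_pos.le
    set M := ‖ζ z‖ with hM
    have hM0 : 0 ≤ M := norm_nonneg _
    have h2 : (∫ θ in (0:ℝ)..(2*π), M * ‖ζ (circleMap z R θ)‖)
        ≤ ∫ θ in (0:ℝ)..(2*π), (M^2/2 + ‖ζ (circleMap z R θ)‖^2/2) := by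
      apply intervalIntegral.integral_mono_on Real.two_pi_pos.le
      · exact (continuous_const.mul hcmC.norm).intervalIntegrable _ _
      · exact (continuous_const.add ((hcmC.norm.pow 2).div_const 2)).intervalIntegrable _ _
      · intro θ _
        nlinarith [sq_nonneg (M - ‖ζ (circleMap z R θ)‖)]
    rw [intervalIntegral.integral_const_mul] at h2
    have h3 : (∫ θ in (0:ℝ)..(2*π), (M^2/2 + ‖ζ (circleMap z R θ)‖^2/2))
        = 2*π*(M^2/2) + (∫ θ in (0:ℝ)..(2*π), ‖ζ (circleMap z R θ)‖^2)/2 := by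
      rw [intervalIntegral.integral_add (continuous_const.intervalIntegrable _ _)
        (show IntervalIntegrable (fun θ => ‖ζ (circleMap z R θ)‖^2/2) volume 0 (2*π) from
          ((hcmC.norm.pow 2).div_const 2).intervalIntegrable _ _),
        intervalIntegral.integral_const, intervalIntegral.integral_div]
      simp
    have h4 : 2*π*M ≤ ∫ θ in (0:ℝ)..(2*π), ‖ζ (circleMap z R θ)‖ := hnorm
    have h5 : 2*π*M^2 ≤ ∫ θ in (0:ℝ)..(2*π), ‖ζ (circleMap z R θ)‖^2 := by
      have h6 : M * (2*π*M) ≤ M * ∫ θ in (0:ℝ)..(2*π), ‖ζ (circleMap z R θ)‖ :=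
        mul_le_mul_of_nonneg_left h4 hM0
      nlinarith [h2, h3, h6, Real.pi_pos]
    have hper : Function.Periodic (fun θ : ℝ => ‖ζ (circleMap z R θ)‖^2) (2*π) := by
      intro θ
      simp only [periodic_circleMap z R θ]
    have hdom : (∫ θ in (-π)..π, ‖ζ (circleMap z R θ)‖^2)
        = ∫ θ in (0:ℝ)..(2*π), ‖ζ (circleMap z R θ)‖^2 := by
      have h7 := hper.intervalIntegral_add_eq (-π) 0
      rw [show -π + 2*π = π by ring, zero_add] at h7
      exact h7
    have hIoo : (∫ θ in Set.Ioo (-π) π, ‖ζ (circleMap z R θ)‖^2)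
        = ∫ θ in (-π)..π, ‖ζ (circleMap z R θ)‖^2 := by
      rw [intervalIntegral.integral_of_le (by linarith [Real.pi_pos] : (-π) ≤ π),
        integral_Ioc_eq_integral_Ioo]
    calc 2*π*‖ζ z‖^2 ≤ ∫ θ in (0:ℝ)..(2*π), ‖ζ (circleMap z R θ)‖^2 := h5
      _ = ∫ θ in Set.Ioo (-π) π, ‖ζ (circleMap z R θ)‖^2 := by rw [hIoo, hdom]
      _ = ∫ θ in Set.Ioo (-π) π, ‖ζ (z + Complex.polarCoord.symm (R, θ))‖^2 := by
        simp only [← hsymm_eq]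
  -- Fubini and conclusion
  set Gz : ℝ × ℝ → ℝ := fun p => p.1 * ‖ζ (z + Complex.polarCoord.symm p)‖^2 with hGz
  have hmaps : ∀ p : ℝ × ℝ, p ∈ Set.Icc 0 s ×ˢ Set.Icc (-π) π →
      z + Complex.polarCoord.symm p ∈ Metric.ball (0:ℂ) 1 := by
    intro p hp
    apply hsub
    rw [Metric.mem_closedBall, dist_eq_norm, add_sub_cancel_left, wente_symm_norm,
      abs_of_nonneg hp.1.1]
    exact hp.1.2
  have hGcont : ContinuousOn Gz (Set.Icc 0 s ×ˢ Set.Icc (-π) π) := by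
    apply continuous_fst.continuousOn.mul
    apply ContinuousOn.pow
    apply ContinuousOn.norm
    exact hζ.continuousOn.comp (continuous_const.add wente_symm_cont).continuousOn hmaps
  have hGint : IntegrableOn Gz (Set.Ioo 0 s ×ˢ Set.Ioo (-π) π) volume :=
    (ContinuousOn.integrableOn_compact (isCompact_Icc.prod isCompact_Icc) hGcont).mono_set
      (Set.prod_mono Set.Ioo_subset_Icc_self Set.Ioo_subset_Icc_self)
  have hEball : (∫ p in Set.Ioo 0 s ×ˢ Set.Ioo (-π) π, Gz p)
      = ∫ w in Metric.ball z s, ‖ζ w‖^2 := by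
    have hBC : (∫ w, (Metric.ball (0:ℂ) s).indicator (fun w => ‖ζ (z + w)‖^2) w)
        = ∫ w in Metric.ball (0:ℂ) s, ‖ζ (z + w)‖^2 := integral_indicator measurableSet_ball
    have hpolar := (Complex.integral_comp_polarCoord_symm
      ((Metric.ball (0:ℂ) s).indicator (fun w => ‖ζ (z + w)‖^2))).symm
    have hcongr : ∀ p ∈ polarCoord.target,
        p.1 • (Metric.ball (0:ℂ) s).indicator (fun w => ‖ζ (z + w)‖^2)
          (Complex.polarCoord.symm p)
        = (Set.Ioo 0 s ×ˢ Set.Ioo (-π) π).indicator Gz p := by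
      intro p hp
      rw [polarCoord_target] at hp
      by_cases hps : p.1 < s
      · rw [Set.indicator_of_mem, Set.indicator_of_mem, smul_eq_mul]
        · exact ⟨⟨hp.1, hps⟩, hp.2⟩
        · rw [mem_ball_zero_iff, wente_symm_norm, abs_of_pos hp.1]
          exact hps
      · rw [Set.indicator_of_notMem, Set.indicator_of_notMem, smul_zero]
        · intro hmem
          exact hps hmem.1.2
        · rw [mem_ball_zero_iff, wente_symm_norm, abs_of_pos hp.1]
          exact hps
    have hind2 : (∫ p in polarCoord.target,
          (Set.Ioo 0 s ×ˢ Set.Ioo (-π) π).indicator Gz p)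
        = ∫ p in Set.Ioo 0 s ×ˢ Set.Ioo (-π) π, Gz p := by
      rw [setIntegral_indicator (measurableSet_Ioo.prod measurableSet_Ioo)]
      congr 1
      rw [polarCoord_target]
      rw [Set.inter_eq_self_of_subset_right]
      exact Set.prod_mono Set.Ioo_subset_Ioi_self subset_rfl
    have htrans : (∫ w in Metric.ball (0:ℂ) s, ‖ζ (z + w)‖^2)
        = ∫ w in Metric.ball z s, ‖ζ w‖^2 := by
      have hpre : (fun w : ℂ => z + w) ⁻¹' (Metric.ball z s) = Metric.ball (0:ℂ) s := by
        ext w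
        simp [Metric.mem_ball, dist_eq_norm, add_sub_cancel_left]
      rw [← hpre]
      exact (measurePreserving_add_left volume z).setIntegral_preimage_emb
        (Homeomorph.measurableEmbedding (Homeomorph.addLeft z))
        (fun w => ‖ζ w‖^2) (Metric.ball z s)
    calc (∫ p in Set.Ioo 0 s ×ˢ Set.Ioo (-π) π, Gz p)
        = ∫ p in polarCoord.target,
            (Set.Ioo 0 s ×ˢ Set.Ioo (-π) π).indicator Gz p := hind2.symm
      _ = ∫ p in polarCoord.target,
            p.1 • (Metric.ball (0:ℂ) s).indicator (fun w => ‖ζ (z + w)‖^2)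
              (Complex.polarCoord.symm p) := by
          exact (setIntegral_congr_fun polarCoord.open_target.measurableSet hcongr).symm
      _ = ∫ w, (Metric.ball (0:ℂ) s).indicator (fun w => ‖ζ (z + w)‖^2) w :=
          Complex.integral_comp_polarCoord_symm _
      _ = ∫ w in Metric.ball (0:ℂ) s, ‖ζ (z + w)‖^2 := hBC
      _ = ∫ w in Metric.ball z s, ‖ζ w‖^2 := htrans
  have hball_le : (∫ w in Metric.ball z s, ‖ζ w‖^2) ≤ ∫ w in Metric.ball (0:ℂ) 1, ‖ζ w‖^2 := by
    apply setIntegral_mono_set hζ2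
    · exact Filter.Eventually.of_forall fun w => sq_nonneg _
    · exact (Metric.ball_subset_closedBall.trans hsub).eventuallyLE
  have hS' : Integrable (Function.uncurry fun R θ => Gz (R, θ))
      ((volume.restrict (Set.Ioo 0 s)).prod (volume.restrict (Set.Ioo (-π) π))) := by
    rw [Measure.prod_restrict, ← Measure.volume_eq_prod]
    exact hGint
  have hfub : (∫ p in Set.Ioo 0 s ×ˢ Set.Ioo (-π) π, Gz p)
      = ∫ R in Set.Ioo 0 s, ∫ θ in Set.Ioo (-π) π, Gz (R, θ) := by
    rw [Measure.volume_eq_prod]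
    exact setIntegral_prod _ (by rwa [← Measure.volume_eq_prod])
  have hlow : π * s^2 * ‖ζ z‖^2 ≤ ∫ p in Set.Ioo 0 s ×ˢ Set.Ioo (-π) π, Gz p := by
    rw [hfub]
    have hmono : (∫ R in Set.Ioo 0 s, R * (2*π*‖ζ z‖^2))
        ≤ ∫ R in Set.Ioo 0 s, ∫ θ in Set.Ioo (-π) π, Gz (R, θ) := by
      apply integral_mono_of_nonneg
      · rw [Filter.EventuallyLE, ae_restrict_iff' measurableSet_Ioo]
        apply Filter.Eventually.of_forall
        intro R hR
        simp only [Pi.zero_apply]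
        exact mul_nonneg hR.1.le (by positivity)
      · exact hS'.integral_prod_left
      · rw [Filter.EventuallyLE, ae_restrict_iff' measurableSet_Ioo]
        apply Filter.Eventually.of_forall
        intro R hR
        have hGeq : (∫ θ in Set.Ioo (-π) π, Gz (R, θ))
            = R * ∫ θ in Set.Ioo (-π) π, ‖ζ (z + Complex.polarCoord.symm (R, θ))‖^2 := by
          rw [← integral_const_mul]
        rw [hGeq]
        exact mul_le_mul_of_nonneg_left (key R hR) hR.1.le
    have hval : (∫ R in Set.Ioo 0 s, R * (2*π*‖ζ z‖^2)) = π * s^2 * ‖ζ z‖^2 := by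
      rw [integral_mul_const]
      have : (∫ R in Set.Ioo 0 s, R) = s^2/2 := by
        rw [← integral_Ioc_eq_integral_Ioo, ← intervalIntegral.integral_of_le hs.le,
          integral_id]
        ring
      rw [this]
      ring
    linarith
  calc ‖ζ z‖ ^ 2 * (π * s ^ 2) = π * s^2 * ‖ζ z‖^2 := by ring
    _ ≤ ∫ p in Set.Ioo 0 s ×ˢ Set.Ioo (-π) π, Gz p := hlow
    _ = ∫ w in Metric.ball z s, ‖ζ w‖^2 := hEball
    _ ≤ ∫ w in Metric.ball (0:ℂ) 1, ‖ζ w‖^2 := hball_le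

/-- Wente-type estimate (Proposition `c:hardy`): for a holomorphic `ζ ∈ L²(B₁)` and
`h ∈ W₀^{1,2}(B₁)` (here realized as a `C¹` function with support in the open unit disk),
`∫_{B₁} h²|ζ|² ≤ 8 (∫_{B₁} |∇h|²)(∫_{B₁} |ζ|²)`. -/
theorem stmt_12 (ζ : ℂ → ℂ) (h : ℂ → ℝ)
    (hζ : DifferentiableOn ℂ ζ (Metric.ball 0 1))
    (hζ2 : IntegrableOn (fun z => ‖ζ z‖^2) (Metric.ball 0 1) volume)
    (hh : ContDiff ℝ 1 h) (hsupp : tsupport h ⊆ Metric.ball 0 1) :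
    ∫ z in Metric.ball (0:ℂ) 1, (h z)^2 * ‖ζ z‖^2 ≤
      8 * (∫ z in Metric.ball (0:ℂ) 1, ‖fderiv ℝ h z‖^2) *
        (∫ z in Metric.ball (0:ℂ) 1, ‖ζ z‖^2) := by
  have hKc : HasCompactSupport h := by
    apply Metric.isCompact_of_isClosed_isBounded (isClosed_tsupport h)
    exact Metric.isBounded_ball.subset hsupp
  obtain ⟨ρ₀, hρ₀0, hρ₀1, hK⟩ :
      ∃ ρ₀ : ℝ, 0 < ρ₀ ∧ ρ₀ < 1 ∧ ∀ z ∈ tsupport h, ‖z‖ ≤ ρ₀ := by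
    rcases (tsupport h).eq_empty_or_nonempty with hemp | hne
    · exact ⟨1/2, by norm_num, by norm_num, by simp [hemp]⟩
    · obtain ⟨x, hxK, hmax⟩ := hKc.exists_isMaxOn hne continuous_norm.continuousOn
      have hx1 : ‖x‖ < 1 := by
        have := hsupp hxK
        rwa [mem_ball_zero_iff] at this
      refine ⟨(‖x‖ + 1)/2, by positivity, by linarith, fun z hz => ?_⟩
      have h2 : ‖z‖ ≤ ‖x‖ := hmax hz
      linarith
  set ρ : ℝ := (ρ₀ + 1)/2 with hρdef
  have hρρ₀ : ρ₀ < ρ := by rw [hρdef]; linarith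
  have hρ1 : ρ < 1 := by rw [hρdef]; linarith
  have hρ0 : 0 < ρ := hρ₀0.trans hρρ₀
  have h0 : ∀ z : ℂ, ρ₀ < ‖z‖ → h z = 0 := fun z hz =>
    image_eq_zero_of_notMem_tsupport fun hmem => absurd (hK z hmem) (not_le.2 hz)
  have hfd0 : ∀ z : ℂ, ρ₀ < ‖z‖ → fderiv ℝ h z = 0 := by
    intro z hz
    by_contra hne
    have hzK : z ∈ tsupport h := support_fderiv_subset ℝ (by simpa [Function.mem_support] using hne)
    exact absurd (hK z hzK) (not_le.2 hz)
  have hhc : Continuous h := hh.continuous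
  have hfc : Continuous (fderiv ℝ h) := hh.continuous_fderiv one_ne_zero
  set F₁ : ℂ → ℝ := fun z => h z ^ 2 * ((1 - ‖z‖) ^ 2)⁻¹ with hF₁
  set F₂ : ℂ → ℝ := fun z => ‖fderiv ℝ h z‖ ^ 2 with hF₂
  have hF₁c : ContinuousOn F₁ (Metric.ball 0 1) := by
    apply (hhc.pow 2).continuousOn.mul
    apply ContinuousOn.inv₀ ((continuous_const.sub continuous_norm).pow 2).continuousOn
    intro z hz
    rw [mem_ball_zero_iff] at hz
    have : 0 < 1 - ‖z‖ := by linarith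
    exact pow_ne_zero 2 this.ne'
  have hF₁0 : ∀ z : ℂ, ρ₀ < ‖z‖ → F₁ z = 0 := fun z hz => by
    simp [hF₁, h0 z hz]
  have hF₂c : ContinuousOn F₂ (Metric.ball 0 1) := (hfc.norm.pow 2).continuousOn
  have hF₂0 : ∀ z : ℂ, ρ₀ < ‖z‖ → F₂ z = 0 := fun z hz => by
    simp [hF₂, hfd0 z hz]
  obtain ⟨hP₁, hI₁⟩ := wente_polar F₁ ρ₀ ρ hρ₀0 hρρ₀ hρ1 hF₁c hF₁0
  obtain ⟨hP₂, hI₂⟩ := wente_polar F₂ ρ₀ ρ hρ₀0 hρρ₀ hρ1 hF₂c hF₂0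
  have hθ : ∀ θ : ℝ, (∫ R in (0:ℝ)..ρ, R * F₁ (Complex.polarCoord.symm (R, θ)))
      ≤ 4 * ∫ R in (0:ℝ)..ρ, R * F₂ (Complex.polarCoord.symm (R, θ)) := by
    intro θ
    set e : ℂ := (Real.cos θ : ℂ) + (Real.sin θ : ℂ) * Complex.I with he_def
    have hsymmθ : ∀ R : ℝ, Complex.polarCoord.symm (R, θ) = R • e := by
      intro R
      simp only [Complex.polarCoord_symm_apply, he_def, Complex.real_smul]
    have he1 : ‖e‖ = 1 := by
      rw [he_def, Complex.ofReal_cos, Complex.ofReal_sin]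
      exact Complex.norm_cos_add_sin_mul_I θ
    set g : ℝ → ℝ := fun R => h (R • e) with hgdef
    set g' : ℝ → ℝ := fun R => fderiv ℝ h (R • e) e with hg'def
    have hgd : ∀ R : ℝ, HasDerivAt g (g' R) R := by
      intro R
      have h1 : HasDerivAt (fun R : ℝ => R • e) ((1:ℝ) • e) R := (hasDerivAt_id R).smul_const e
      have h2 := (hh.differentiable one_ne_zero (R • e)).hasFDerivAt
      simpa [hgdef, hg'def, Function.comp_def] using h2.comp_hasDerivAt R h1
    have hg'c : Continuous g' := by
      have h3 : Continuous fun R : ℝ => fderiv ℝ h (R • e) :=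
        hfc.comp (continuous_id.smul continuous_const)
      exact h3.clm_apply continuous_const
    have hnorm_smul : ∀ R : ℝ, 0 ≤ R → ‖R • e‖ = R := fun R hR => by
      rw [norm_smul, he1, mul_one, Real.norm_eq_abs, abs_of_nonneg hR]
    have hgρ : g ρ = 0 := by
      apply h0
      rw [hnorm_smul ρ hρ0.le]
      exact hρρ₀
    calc (∫ R in (0:ℝ)..ρ, R * F₁ (Complex.polarCoord.symm (R, θ)))
        = ∫ R in (0:ℝ)..ρ, g R ^ 2 * (R * ((1 - R) ^ 2)⁻¹) := by
          apply intervalIntegral.integral_congr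
          intro R hR
          rw [Set.uIcc_of_le hρ0.le] at hR
          simp only [hsymmθ, hF₁, hgdef]
          rw [hnorm_smul R hR.1]
          ring
      _ ≤ 4 * ∫ R in (0:ℝ)..ρ, R * g' R ^ 2 := wente_hardy1d g g' ρ hρ0 hρ1 hgd hg'c hgρ
      _ ≤ 4 * ∫ R in (0:ℝ)..ρ, R * ‖fderiv ℝ h (R • e)‖ ^ 2 := by
          have hmono : (∫ R in (0:ℝ)..ρ, R * g' R ^ 2)
              ≤ ∫ R in (0:ℝ)..ρ, R * ‖fderiv ℝ h (R • e)‖ ^ 2 := by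
            apply intervalIntegral.integral_mono_on hρ0.le
            · exact (continuous_id.mul (hg'c.pow 2)).intervalIntegrable _ _
            · exact (continuous_id.mul
                (((hfc.comp (continuous_id.smul continuous_const)).norm).pow 2)).intervalIntegrable _ _
            · intro R hR
              apply mul_le_mul_of_nonneg_left _ hR.1
              have hb : |g' R| ≤ ‖fderiv ℝ h (R • e)‖ := by
                simpa [he1, Real.norm_eq_abs, hg'def] using (fderiv ℝ h (R • e)).le_opNorm e
              calc g' R ^ 2 = |g' R| ^ 2 := (sq_abs _).symm
                _ ≤ ‖fderiv ℝ h (R • e)‖ ^ 2 := pow_le_pow_left₀ (abs_nonneg _) hb 2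
          linarith
      _ = 4 * ∫ R in (0:ℝ)..ρ, R * F₂ (Complex.polarCoord.symm (R, θ)) := by
          simp only [hF₂, hsymmθ]
  have hHardy : (∫ z in Metric.ball (0:ℂ) 1, F₁ z)
      ≤ 4 * ∫ z in Metric.ball (0:ℂ) 1, F₂ z := by
    rw [hP₁, hP₂]
    calc (∫ θ in Set.Ioo (-π) π, ∫ R in (0:ℝ)..ρ, R * F₁ (Complex.polarCoord.symm (R, θ)))
        ≤ ∫ θ in Set.Ioo (-π) π, 4 * ∫ R in (0:ℝ)..ρ, R * F₂ (Complex.polarCoord.symm (R, θ)) :=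
          integral_mono hI₁ (hI₂.const_mul 4) fun θ => hθ θ
      _ = 4 * ∫ θ in Set.Ioo (-π) π, ∫ R in (0:ℝ)..ρ, R * F₂ (Complex.polarCoord.symm (R, θ)) :=
          integral_const_mul 4 _
  set Iζ := ∫ w in Metric.ball (0:ℂ) 1, ‖ζ w‖ ^ 2 with hIζdef
  have hIζ0 : 0 ≤ Iζ := setIntegral_nonneg measurableSet_ball fun w _ => sq_nonneg _
  have hpt : ∀ z ∈ Metric.ball (0:ℂ) 1, h z ^ 2 * ‖ζ z‖ ^ 2 ≤ F₁ z * (4 / π * Iζ) := by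
    intro z hz
    have hzn : ‖z‖ < 1 := mem_ball_zero_iff.mp hz
    have ht : 0 < 1 - ‖z‖ := by linarith
    have hsm := wente_submean ζ hζ hζ2 z hz
    have hpos : 0 < π * ((1 - ‖z‖) / 2) ^ 2 := by
      have := Real.pi_pos
      positivity
    have h1 : ‖ζ z‖ ^ 2 ≤ Iζ / (π * ((1 - ‖z‖) / 2) ^ 2) := (le_div_iff₀ hpos).mpr hsm
    have h2 : h z ^ 2 * ‖ζ z‖ ^ 2 ≤ h z ^ 2 * (Iζ / (π * ((1 - ‖z‖) / 2) ^ 2)) :=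
      mul_le_mul_of_nonneg_left h1 (sq_nonneg _)
    have h3 : h z ^ 2 * (Iζ / (π * ((1 - ‖z‖) / 2) ^ 2)) = F₁ z * (4 / π * Iζ) := by
      simp only [hF₁]
      have hπ := Real.pi_ne_zero
      field_simp
      ring
    linarith
  have hint1 : IntegrableOn (fun z => h z ^ 2 * ‖ζ z‖ ^ 2) (Metric.ball (0:ℂ) 1) volume := by
    obtain ⟨C, hC⟩ := hhc.bounded_above_of_compact_support hKc
    apply Integrable.bdd_mul (c := C^2) hζ2 (hhc.pow 2).aestronglyMeasurable
    refine Filter.Eventually.of_forall fun x => ?_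
    calc ‖h x ^ 2‖ = ‖h x‖ ^ 2 := by rw [norm_pow]
      _ ≤ C ^ 2 := pow_le_pow_left₀ (norm_nonneg (h x)) (hC x) 2
  have hint2 : IntegrableOn F₁ (Metric.ball (0:ℂ) 1) volume :=
    wente_integrableOn F₁ ρ₀ hρ₀1 hF₁c hF₁0
  have hstep2 : (∫ z in Metric.ball (0:ℂ) 1, h z ^ 2 * ‖ζ z‖ ^ 2)
      ≤ (∫ z in Metric.ball (0:ℂ) 1, F₁ z) * (4 / π * Iζ) := by
    calc (∫ z in Metric.ball (0:ℂ) 1, h z ^ 2 * ‖ζ z‖ ^ 2)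
        ≤ ∫ z in Metric.ball (0:ℂ) 1, F₁ z * (4 / π * Iζ) :=
          setIntegral_mono_on hint1 (hint2.mul_const _) measurableSet_ball hpt
      _ = (∫ z in Metric.ball (0:ℂ) 1, F₁ z) * (4 / π * Iζ) := integral_mul_const _ _
  have hF₁nn : 0 ≤ ∫ z in Metric.ball (0:ℂ) 1, F₁ z :=
    setIntegral_nonneg measurableSet_ball fun z _ => by
      simp only [hF₁]
      positivity
  have hF₂nn : 0 ≤ ∫ z in Metric.ball (0:ℂ) 1, F₂ z :=
    setIntegral_nonneg measurableSet_ball fun z _ => by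
      simp only [hF₂]
      positivity
  have hc : 0 ≤ 4 / π * Iζ := by
    have := Real.pi_pos
    positivity
  have h5 : (∫ z in Metric.ball (0:ℂ) 1, F₁ z) * (4 / π * Iζ)
      ≤ (4 * ∫ z in Metric.ball (0:ℂ) 1, F₂ z) * (4 / π * Iζ) :=
    mul_le_mul_of_nonneg_right hHardy hc
  have hπ8 : 16 / π ≤ 8 := by
    rw [div_le_iff₀ Real.pi_pos]
    nlinarith [Real.pi_gt_three]
  have h6 : (4 * ∫ z in Metric.ball (0:ℂ) 1, F₂ z) * (4 / π * Iζ)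
      ≤ 8 * (∫ z in Metric.ball (0:ℂ) 1, F₂ z) * Iζ := by
    have e1 : (4 * ∫ z in Metric.ball (0:ℂ) 1, F₂ z) * (4 / π * Iζ)
        = (16 / π) * ((∫ z in Metric.ball (0:ℂ) 1, F₂ z) * Iζ) := by ring
    have e2 : 8 * (∫ z in Metric.ball (0:ℂ) 1, F₂ z) * Iζ
        = 8 * ((∫ z in Metric.ball (0:ℂ) 1, F₂ z) * Iζ) := by ring
    rw [e1, e2]
    exact mul_le_mul_of_nonneg_right hπ8 (mul_nonneg hF₂nn hIζ0)
  calc (∫ z in Metric.ball (0:ℂ) 1, h z ^ 2 * ‖ζ z‖ ^ 2)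
      ≤ (∫ z in Metric.ball (0:ℂ) 1, F₁ z) * (4 / π * Iζ) := hstep2
    _ ≤ (4 * ∫ z in Metric.ball (0:ℂ) 1, F₂ z) * (4 / π * Iζ) := h5
    _ ≤ 8 * (∫ z in Metric.ball (0:ℂ) 1, F₂ z) * Iζ := h6
end

section
/- Let Σ be a branched minimal immersion of the 2-sphere into a closed Riemannian 3-manifold (M, g(0)) and let g(t) evolve by Ricci flow. Then d/dt|_{t=0} Area_{g(t)}(Σ) ≤ -4π - (Area_{g(0)}(Σ)/2)·min_M R(0), where R(0) is the scalar curvature at time 0. (Uses Gauss–Bonnet with branch points: ∫_Σ K_Σ = 4π + 2π·Σᵢbᵢ where bᵢ ≥ 0 are the branching orders.) -/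
open MeasureTheory Real Finset

/-- Lemma `l:upper` of Colding–Minicozzi: for a branched minimal immersion `Σ` of the
2-sphere in a closed 3-manifold evolving by Ricci flow,
`d/dt|_{t=0} Area_{g(t)}(Σ) ≤ -4π - (Area_{g(0)}(Σ)/2)·min_M R(0)`.
The surface is encoded as a finite measure space `(S, μ)` (area measure, so
`Area_{g(0)}(Σ) = μ(S)`); the first variation formula (`hvar`), the Gauss equation for
(branched) minimal surfaces (`hgauss`), the 3-dimensional curvature identity (`h3d`),
and the Gauss–Bonnet theorem with branch points of orders `b i > 0`
(`hGB : ∫ K_Σ = 4π + 2π Σᵢ bᵢ`) are given, together with `|A|² ≥ 0` and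
`Rmin ≤ R` pointwise. -/
theorem stmt_19 {S : Type*} [MeasurableSpace S] (μ : Measure S) [IsFiniteMeasure μ]
    (Area : ℝ → ℝ) (Rsc Ricnn Ksig KM Asq : S → ℝ) (Rmin : ℝ)
    (k : ℕ) (b : Fin k → ℕ) (hb : ∀ i, 0 < b i)
    (hRint : Integrable Rsc μ) (hRicint : Integrable Ricnn μ)
    (hKint : Integrable Ksig μ) (hKMint : Integrable KM μ) (hAint : Integrable Asq μ)
    (hgauss : ∀ p, Ksig p = KM p - Asq p / 2)
    (h3d : ∀ p, Rsc p - Ricnn p = KM p + Rsc p / 2)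
    (hAsq : ∀ p, 0 ≤ Asq p)
    (hRmin : ∀ p, Rmin ≤ Rsc p)
    (hGB : (∫ p, Ksig p ∂μ) = 4*π + 2*π * ∑ i, (b i : ℝ))
    (hvar : HasDerivAt Area (-∫ p, (Rsc p - Ricnn p) ∂μ) 0) :
    deriv Area 0 ≤ -(4*π) - (μ Set.univ).toReal / 2 * Rmin := by
  rw [hvar.deriv]
  have hEq : ∀ p, Rsc p - Ricnn p = Ksig p + Asq p / 2 + Rsc p / 2 := by
    intro p; rw [h3d p, hgauss p]; ring
  have hint : (∫ p, (Rsc p - Ricnn p) ∂μ)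
      = (∫ p, Ksig p ∂μ) + (∫ p, Asq p / 2 ∂μ) + (∫ p, Rsc p / 2 ∂μ) := by
    have h1 : Integrable (fun p => Ksig p + Asq p / 2) μ := hKint.add (hAint.div_const 2)
    rw [integral_congr_ae (Filter.Eventually.of_forall hEq),
      integral_add h1 (hRint.div_const 2), integral_add hKint (hAint.div_const 2)]
  have hA0 : 0 ≤ ∫ p, Asq p / 2 ∂μ :=
    integral_nonneg fun p => div_nonneg (hAsq p) two_pos.le
  have hR : (μ Set.univ).toReal * (Rmin / 2) ≤ ∫ p, Rsc p / 2 ∂μ := by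
    have := integral_mono (integrable_const (Rmin / 2)) (hRint.div_const 2)
      (fun p => by have := hRmin p; linarith)
    simpa [integral_const, smul_eq_mul, measureReal_def] using this
  have hb0 : (0:ℝ) ≤ 2*π * ∑ i, (b i : ℝ) := by
    have : (0:ℝ) ≤ ∑ i, (b i : ℝ) := Finset.sum_nonneg fun i _ => by positivity
    positivity
  have hpi := Real.pi_pos
  rw [hint, hGB]
  nlinarith [hA0, hR]
end
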